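/- A convex quadrangle Q ⊆ ℝ² satisfies i(Q,R(Q)) < ∞ if and only if Q is a rectangle; moreover, if Q is a rectangle then i(Q,R(Q)) = 4. -/

import Mathlib

open Metric Set
open scoped RealInnerProductSpace

/-- The quantified t-illumination number `i(K,ε)`: the least `m` for which there exist
unit vectors `r_1, …, r_m` such that every `x ∈ K` satisfies `x + ε • r_i ∈ K` for some `i`;
`∞` if no finite such family exists. -/
noncomputable def iq {n : ℕ} (K : Set (EuclideanSpace ℝ (Fin n))) (ε : ℝ) : ℕ∞ :=
  sInf {m : ℕ∞ | ∃ s : Finset (EuclideanSpace ℝ (Fin n)), (s.card : ℕ∞) = m ∧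
    (∀ r ∈ s, ‖r‖ = 1) ∧ ∀ x ∈ K, ∃ r ∈ s, x + ε • r ∈ K}

/-- The quantified illumination number `c(K,ε)`: the least `m` for which there exist
unit vectors `r_1, …, r_m` such that every `x ∈ K` satisfies `x + ε • r_i ∈ int K` for some `i`;
`∞` if no finite such family exists. -/
noncomputable def cq {n : ℕ} (K : Set (EuclideanSpace ℝ (Fin n))) (ε : ℝ) : ℕ∞ :=
  sInf {m : ℕ∞ | ∃ s : Finset (EuclideanSpace ℝ (Fin n)), (s.card : ℕ∞) = m ∧
    (∀ r ∈ s, ‖r‖ = 1) ∧ ∀ x ∈ K, ∃ r ∈ s, x + ε • r ∈ interior K}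

/-- `B(c, R)` is the circumball of `K`: a closed ball containing `K` of minimal radius. -/
def IsCircumball {n : ℕ} (K : Set (EuclideanSpace ℝ (Fin n)))
    (c : EuclideanSpace ℝ (Fin n)) (R : ℝ) : Prop :=
  K ⊆ closedBall c R ∧ ∀ (c' : EuclideanSpace ℝ (Fin n)) (R' : ℝ), K ⊆ closedBall c' R' → R ≤ R'

set_option maxHeartbeats 2000000

noncomputable abbrev E2 := EuclideanSpace ℝ (Fin 2)


section core
variable {ι : Type*} [DecidableEq ι]

lemma core0 (a b : ℝ) (ha : 0 < a) (hb : 0 < b) (s : Finset ι) (P Q : ι → ℝ)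
    (hcard : s.card ≤ 3)
    (hcon : ∀ i ∈ s, a^2 * P i^2 + b^2 * Q i^2 = (a^2+b^2)/4)
    (hcov : ∀ u t : ℝ, 0 ≤ u → u ≤ 1 → 0 ≤ t → t ≤ 1 →
      ∃ i ∈ s, -P i ≤ u ∧ u ≤ 1 - P i ∧ -Q i ≤ t ∧ t ≤ 1 - Q i)
    (hsp : ∃ i ∈ s, P i = 0 ∧ 0 ≤ Q i) : False := by
  have ha2 : 0 < a^2 := by positivity
  have hb2 : 0 < b^2 := by positivity
  obtain ⟨i1, hi1s, hP1, hQ1pos⟩ := hsp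
  have hc1 := hcon i1 hi1s
  rw [hP1] at hc1
  have hQ1sq : Q i1^2 > 1/4 := by nlinarith
  have hQ1 : 1/2 < Q i1 := by nlinarith
  obtain ⟨i2, hi2s, h2a, h2b, h2c, h2d⟩ := hcov 0 (1/2) le_rfl zero_le_one (by norm_num) (by norm_num)
  have hc2 := hcon i2 hi2s
  have hq2sq : Q i2^2 ≤ 1/4 := by nlinarith
  have hp2sq : P i2^2 ≥ 1/4 := by nlinarith
  have hP2 : 1/2 ≤ P i2 := by nlinarith
  obtain ⟨i3, hi3s, h3a, h3b, h3c, h3d⟩ := hcov 1 (1/2) zero_le_one le_rfl (by norm_num) (by norm_num)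
  have hc3 := hcon i3 hi3s
  have hq3sq : Q i3^2 ≤ 1/4 := by nlinarith
  have hp3sq : P i3^2 ≥ 1/4 := by nlinarith
  have hP3 : P i3 ≤ -(1/2) := by nlinarith
  have h12 : i1 ≠ i2 := by rintro rfl; linarith
  have h13 : i1 ≠ i3 := by rintro rfl; linarith
  have h23 : i2 ≠ i3 := by rintro rfl; linarith
  have hsub : ({i1, i2, i3} : Finset ι) ⊆ s := by
    intro x hx
    simp only [Finset.mem_insert, Finset.mem_singleton] at hx
    rcases hx with rfl | rfl | rfl <;> assumption
  have hcard3 : ({i1, i2, i3} : Finset ι).card = 3 := by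
    rw [Finset.card_insert_of_notMem (by simp [h12, h13]),
      Finset.card_insert_of_notMem (by simp [h23]), Finset.card_singleton]
  have hseq : ({i1, i2, i3} : Finset ι) = s :=
    Finset.eq_of_subset_of_card_le hsub (by omega)
  have hmem : ∀ i ∈ s, i = i1 ∨ i = i2 ∨ i = i3 := by
    intro i hi
    rw [← hseq] at hi
    simpa using hi
  obtain ⟨i4, hi4s, h4a, h4b, h4c, h4d⟩ := hcov (1/2) (1/2) (by norm_num) (by norm_num) (by norm_num) (by norm_num)
  rcases hmem i4 hi4s with rfl | rfl | rfl
  · linarith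
  · -- i4 = i2
    have hP2e : P i4 = 1/2 := by linarith
    rw [hP2e] at hc2
    have hq4 : Q i4^2 - 1/4 = 0 := by
      have hz : b^2 * (Q i4^2 - 1/4) = 0 := by linear_combination hc2
      rcases mul_eq_zero.1 hz with h | h
      · nlinarith
      · exact h
    have hQ2e : (Q i4 - 1/2) * (Q i4 + 1/2) = 0 := by linear_combination hq4
    rcases mul_eq_zero.1 hQ2e with h | h
    · have hQ2 : Q i4 = 1/2 := by linarith
      obtain ⟨j, hjs, ja, jb, jc, jd⟩ := hcov (1/4) (3/4) (by norm_num) (by norm_num) (by norm_num) (by norm_num)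
      rcases hmem j hjs with rfl | rfl | rfl
      · linarith
      · linarith
      · linarith
    · have hQ2 : Q i4 = -(1/2) := by linarith
      have ht1 : (1/4 : ℝ) ≤ max (1/4 : ℝ) ((3 - 2 * Q i1)/4) := le_max_left _ _
      have ht2 : (3 - 2 * Q i1)/4 ≤ max (1/4 : ℝ) ((3 - 2 * Q i1)/4) := le_max_right _ _
      have ht3 : max (1/4 : ℝ) ((3 - 2 * Q i1)/4) < 1/2 := max_lt (by norm_num) (by linarith)
      obtain ⟨j, hjs, ja, jb, jc, jd⟩ := hcov (1/4) (max (1/4 : ℝ) ((3 - 2 * Q i1)/4))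
        (by norm_num) (by norm_num) (by linarith) (by linarith)
      rcases hmem j hjs with rfl | rfl | rfl
      · linarith
      · linarith
      · linarith
  · -- i4 = i3
    have hP3e : P i4 = -(1/2) := by linarith
    rw [hP3e] at hc3
    have hq4 : Q i4^2 - 1/4 = 0 := by
      have hz : b^2 * (Q i4^2 - 1/4) = 0 := by linear_combination hc3
      rcases mul_eq_zero.1 hz with h | h
      · nlinarith
      · exact h
    have hQ3e : (Q i4 - 1/2) * (Q i4 + 1/2) = 0 := by linear_combination hq4
    rcases mul_eq_zero.1 hQ3e with h | h
    · have hQ3 : Q i4 = 1/2 := by linarith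
      obtain ⟨j, hjs, ja, jb, jc, jd⟩ := hcov (3/4) (3/4) (by norm_num) (by norm_num) (by norm_num) (by norm_num)
      rcases hmem j hjs with rfl | rfl | rfl
      · linarith
      · linarith
      · linarith
    · have hQ3 : Q i4 = -(1/2) := by linarith
      have ht1 : (1/4 : ℝ) ≤ max (1/4 : ℝ) ((3 - 2 * Q i1)/4) := le_max_left _ _
      have ht2 : (3 - 2 * Q i1)/4 ≤ max (1/4 : ℝ) ((3 - 2 * Q i1)/4) := le_max_right _ _
      have ht3 : max (1/4 : ℝ) ((3 - 2 * Q i1)/4) < 1/2 := max_lt (by norm_num) (by linarith)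
      obtain ⟨j, hjs, ja, jb, jc, jd⟩ := hcov (3/4) (max (1/4 : ℝ) ((3 - 2 * Q i1)/4))
        (by norm_num) (by norm_num) (by linarith) (by linarith)
      rcases hmem j hjs with rfl | rfl | rfl
      · linarith
      · linarith
      · linarith

lemma core (a b : ℝ) (ha : 0 < a) (hb : 0 < b) (s : Finset ι) (P Q : ι → ℝ)
    (hcard : s.card ≤ 3)
    (hcon : ∀ i ∈ s, a^2 * P i^2 + b^2 * Q i^2 = (a^2+b^2)/4)
    (hcov : ∀ u t : ℝ, 0 ≤ u → u ≤ 1 → 0 ≤ t → t ≤ 1 →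
      ∃ i ∈ s, -P i ≤ u ∧ u ≤ 1 - P i ∧ -Q i ≤ t ∧ t ≤ 1 - Q i) : False := by
  have hconP : ∀ i ∈ s, b^2 * Q i^2 + a^2 * P i^2 = (b^2+a^2)/4 := by
    intro i hi; linear_combination hcon i hi
  have hconN : ∀ i ∈ s, a^2 * P i^2 + b^2 * (-Q i)^2 = (a^2+b^2)/4 := by
    intro i hi; linear_combination hcon i hi
  have hconPN : ∀ i ∈ s, b^2 * Q i^2 + a^2 * (-P i)^2 = (b^2+a^2)/4 := by
    intro i hi; linear_combination hcon i hi
  have hcovN : ∀ u t : ℝ, 0 ≤ u → u ≤ 1 → 0 ≤ t → t ≤ 1 →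
      ∃ i ∈ s, -P i ≤ u ∧ u ≤ 1 - P i ∧ -(-Q i) ≤ t ∧ t ≤ 1 - (-Q i) := by
    intro u t hu hu1 ht ht1
    obtain ⟨i, his, c1, c2, c3, c4⟩ := hcov u (1-t) hu hu1 (by linarith) (by linarith)
    exact ⟨i, his, c1, c2, by linarith, by linarith⟩
  have hcovS : ∀ u t : ℝ, 0 ≤ u → u ≤ 1 → 0 ≤ t → t ≤ 1 →
      ∃ i ∈ s, -Q i ≤ u ∧ u ≤ 1 - Q i ∧ -P i ≤ t ∧ t ≤ 1 - P i := by
    intro u t hu hu1 ht ht1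
    obtain ⟨i, his, c1, c2, c3, c4⟩ := hcov t u ht ht1 hu hu1
    exact ⟨i, his, c3, c4, c1, c2⟩
  have hcovSN : ∀ u t : ℝ, 0 ≤ u → u ≤ 1 → 0 ≤ t → t ≤ 1 →
      ∃ i ∈ s, -Q i ≤ u ∧ u ≤ 1 - Q i ∧ -(-P i) ≤ t ∧ t ≤ 1 - (-P i) := by
    intro u t hu hu1 ht ht1
    obtain ⟨i, his, c1, c2, c3, c4⟩ := hcov (1-t) u (by linarith) (by linarith) hu hu1
    exact ⟨i, his, c3, c4, by linarith, by linarith⟩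
  obtain ⟨j1, hj1, a1, b1, c1, d1⟩ := hcov 0 0 le_rfl zero_le_one le_rfl zero_le_one
  obtain ⟨j2, hj2, a2, b2, c2, d2⟩ := hcov 1 0 zero_le_one le_rfl le_rfl zero_le_one
  obtain ⟨j3, hj3, a3, b3, c3, d3⟩ := hcov 0 1 le_rfl zero_le_one zero_le_one le_rfl
  obtain ⟨j4, hj4, a4, b4, c4, d4⟩ := hcov 1 1 zero_le_one le_rfl zero_le_one le_rfl
  by_cases e12 : j1 = j2
  · subst e12
    exact core0 a b ha hb s P Q hcard hcon hcov ⟨j1, hj1, by linarith, by linarith⟩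
  by_cases e34 : j3 = j4
  · subst e34
    refine core0 a b ha hb s P (fun i => -Q i) hcard hconN hcovN ⟨j3, hj3, by linarith, ?_⟩
    simp only [neg_nonneg]; linarith
  by_cases e13 : j1 = j3
  · subst e13
    exact core0 b a hb ha s Q P hcard hconP hcovS ⟨j1, hj1, by linarith, by linarith⟩
  by_cases e24 : j2 = j4
  · subst e24
    refine core0 b a hb ha s Q (fun i => -P i) hcard hconPN hcovSN ⟨j2, hj2, by linarith, ?_⟩
    simp only [neg_nonneg]; linarith
  by_cases e14 : j1 = j4
  · subst e14
    have hc := hcon j1 hj1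
    have hP : P j1 = 0 := by linarith
    have hQ : Q j1 = 0 := by linarith
    rw [hP, hQ] at hc
    nlinarith
  by_cases e23 : j2 = j3
  · subst e23
    have hc := hcon j2 hj2
    have hP : P j2 = 0 := by linarith
    have hQ : Q j2 = 0 := by linarith
    rw [hP, hQ] at hc
    nlinarith
  have hsub : ({j1, j2, j3, j4} : Finset ι) ⊆ s := by
    intro x hx
    simp only [Finset.mem_insert, Finset.mem_singleton] at hx
    rcases hx with rfl | rfl | rfl | rfl <;> assumption
  have hcard4 : ({j1, j2, j3, j4} : Finset ι).card = 4 := by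
    rw [Finset.card_insert_of_notMem (by simp [e12, e13, e14]),
      Finset.card_insert_of_notMem (by simp [e23, e24]),
      Finset.card_insert_of_notMem (by simp [e34]), Finset.card_singleton]
  have := Finset.card_le_card hsub
  omega

end core



lemma inner2 (x y : E2) : ⟪x, y⟫ = x 0 * y 0 + x 1 * y 1 := by
  simp [PiLp.inner_apply, Fin.sum_univ_two, RCLike.inner_apply, mul_comm]

lemma eq_zero_of_coords {x : E2} (h0 : x 0 = 0) (h1 : x 1 = 0) : x = 0 := by
  ext i
  fin_cases i <;> simpa

lemma coords_pos {x : E2} (h : x ≠ 0) : 0 < x 0 ^ 2 + x 1 ^ 2 := by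
  rcases lt_or_eq_of_le (sq_nonneg (x 0)) with h0 | h0
  · nlinarith [sq_nonneg (x 1)]
  rcases lt_or_eq_of_le (sq_nonneg (x 1)) with h1 | h1
  · nlinarith
  exfalso
  exact h (eq_zero_of_coords (by nlinarith) (by nlinarith))

lemma norm_sq_coords (x : E2) : ‖x‖^2 = x 0 ^2 + x 1^2 := by
  rw [← real_inner_self_eq_norm_sq, inner2]; ring

lemma solve2 {p q w : E2} (hdet : p 0 * q 1 - p 1 * q 0 ≠ 0)
    (h1 : ⟪p, w⟫ = 0) (h2 : ⟪q, w⟫ = 0) : w = 0 := by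
  rw [inner2] at h1 h2
  refine eq_zero_of_coords ?_ ?_
  · have h : (p 0 * q 1 - p 1 * q 0) * w 0 = 0 := by linear_combination q 1 * h1 - p 1 * h2
    exact (mul_eq_zero.1 h).resolve_left hdet
  · have h : (p 0 * q 1 - p 1 * q 0) * w 1 = 0 := by linear_combination p 0 * h2 - q 0 * h1
    exact (mul_eq_zero.1 h).resolve_left hdet

lemma det_ne_of_orth {A B : E2} (hA : A ≠ 0) (hB : B ≠ 0) (hAB : ⟪A, B⟫ = 0) :
    A 0 * B 1 - A 1 * B 0 ≠ 0 := by
  rw [inner2] at hAB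
  intro h
  have hL : (A 0^2 + A 1^2) * (B 0^2 + B 1^2) = 0 := by
    linear_combination (A 0 * B 1 - A 1 * B 0) * h + (A 0 * B 0 + A 1 * B 1) * hAB
  exact absurd hL (ne_of_gt (mul_pos (coords_pos hA) (coords_pos hB)))

lemma basis_expand {A B : E2} (hA : A ≠ 0) (hB : B ≠ 0) (hAB : ⟪A, B⟫ = 0) (r : E2) :
    r = (⟪r, A⟫/‖A‖^2) • A + (⟪r, B⟫/‖B‖^2) • B := by
  have hnA : ‖A‖^2 ≠ 0 := pow_ne_zero _ (norm_ne_zero_iff.2 hA)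
  have hnB : ‖B‖^2 ≠ 0 := pow_ne_zero _ (norm_ne_zero_iff.2 hB)
  have hBA : ⟪B, A⟫ = (0:ℝ) := by rw [real_inner_comm]; exact hAB
  have h1 : ⟪A, r - ((⟪r, A⟫/‖A‖^2) • A + (⟪r, B⟫/‖B‖^2) • B)⟫ = 0 := by
    rw [inner_sub_right, inner_add_right, real_inner_smul_right, real_inner_smul_right,
      real_inner_self_eq_norm_sq, hAB, real_inner_comm A r]
    field_simp
    ring
  have h2 : ⟪B, r - ((⟪r, A⟫/‖A‖^2) • A + (⟪r, B⟫/‖B‖^2) • B)⟫ = 0 := by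
    rw [inner_sub_right, inner_add_right, real_inner_smul_right, real_inner_smul_right,
      real_inner_self_eq_norm_sq, hBA, real_inner_comm B r]
    field_simp
    ring
  have := solve2 (det_ne_of_orth hA hB hAB) h1 h2
  rw [sub_eq_zero] at this
  exact this

lemma norm_sq_expand {A B : E2} (hA : A ≠ 0) (hB : B ≠ 0) (hAB : ⟪A, B⟫ = 0) (r : E2) :
    ‖r‖^2 = ⟪r, A⟫^2/‖A‖^2 + ⟪r, B⟫^2/‖B‖^2 := by
  conv_lhs => rw [← real_inner_self_eq_norm_sq, basis_expand hA hB hAB r]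
  rw [inner_add_right, real_inner_smul_right, real_inner_smul_right,
    ← basis_expand hA hB hAB r]
  ring

lemma box_mem {Qs : Set E2} (hconv : Convex ℝ Qs) {v0 v1 v2 v3 : E2}
    (h0 : v0 ∈ Qs) (h1 : v1 ∈ Qs) (h2 : v2 ∈ Qs) (h3 : v3 ∈ Qs)
    (hpar : v0 + v2 = v1 + v3) {s t : ℝ} (hs0 : 0 ≤ s) (hs1 : s ≤ 1)
    (ht0 : 0 ≤ t) (ht1 : t ≤ 1) :
    v0 + s • (v1 - v0) + t • (v3 - v0) ∈ Qs := by
  have hv2 : v2 = v1 + v3 - v0 := by rw [eq_sub_iff_add_eq, ← hpar]; abel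
  have p1 : (1-s) • v0 + s • v1 ∈ Qs := hconv h0 h1 (by linarith) hs0 (by ring)
  have p2 : (1-s) • v3 + s • v2 ∈ Qs := hconv h3 h2 (by linarith) hs0 (by ring)
  have hfin : (1-t) • ((1-s) • v0 + s • v1) + t • ((1-s) • v3 + s • v2) ∈ Qs :=
    hconv p1 p2 (by linarith) ht0 (by ring)
  convert hfin using 1
  rw [hv2]
  module

lemma box_rep {v : Fin 4 → E2} (hpar : v 0 + v 2 = v 1 + v 3) {x : E2}
    (hx : x ∈ convexHull ℝ (Set.range v)) :
    ∃ s t : ℝ, 0 ≤ s ∧ s ≤ 1 ∧ 0 ≤ t ∧ t ≤ 1 ∧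
      x = v 0 + s • (v 1 - v 0) + t • (v 3 - v 0) := by
  have hv2 : v 2 = v 1 + v 3 - v 0 := by rw [eq_sub_iff_add_eq, ← hpar]; abel
  set Box : Set E2 := {x | ∃ s t : ℝ, 0 ≤ s ∧ s ≤ 1 ∧ 0 ≤ t ∧ t ≤ 1 ∧
      x = v 0 + s • (v 1 - v 0) + t • (v 3 - v 0)} with hBox
  have hconv : Convex ℝ Box := by
    rintro x ⟨s, t, hs0, hs1, ht0, ht1, rfl⟩ y ⟨s', t', hs0', hs1', ht0', ht1', rfl⟩ a b ha hb hab
    refine ⟨a*s + b*s', a*t + b*t', by positivity, ?_, by positivity, ?_, ?_⟩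
    · nlinarith
    · nlinarith
    · have hb' : b = 1 - a := by linarith
      subst hb'
      module
  have hsub : Set.range v ⊆ Box := by
    rintro _ ⟨i, rfl⟩
    fin_cases i
    · exact ⟨0, 0, le_rfl, zero_le_one, le_rfl, zero_le_one, by show v 0 = _; module⟩
    · exact ⟨1, 0, zero_le_one, le_rfl, le_rfl, zero_le_one, by show v 1 = _; module⟩
    · exact ⟨1, 1, zero_le_one, le_rfl, zero_le_one, le_rfl, by show v 2 = _; rw [hv2]; module⟩
    · exact ⟨0, 1, le_rfl, zero_le_one, zero_le_one, le_rfl, by show v 3 = _; module⟩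
  exact convexHull_min hsub hconv hx

lemma coords_unique {A B : E2} (hdet : A 0 * B 1 - A 1 * B 0 ≠ 0) {s t s' t' : ℝ}
    (h : s • A + t • B = s' • A + t' • B) : s = s' ∧ t = t' := by
  have h0 := congrArg (fun z => z 0) h
  have h1 := congrArg (fun z => z 1) h
  simp only [PiLp.add_apply, PiLp.smul_apply, smul_eq_mul] at h0 h1
  constructor
  · have : (A 0 * B 1 - A 1 * B 0) * (s - s') = 0 := by linear_combination B 1 * h0 - B 0 * h1
    have := (mul_eq_zero.1 this).resolve_left hdet
    linarith
  · have : (A 0 * B 1 - A 1 * B 0) * (t - t') = 0 := by linear_combination A 0 * h1 - A 1 * h0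
    have := (mul_eq_zero.1 this).resolve_left hdet
    linarith




-- rotation by 90 degrees
noncomputable def rot (w : E2) : E2 := (WithLp.equiv 2 (Fin 2 → ℝ)).symm ![-(w 1), w 0]

lemma rot_apply0 (w : E2) : rot w 0 = -(w 1) := rfl
lemma rot_apply1 (w : E2) : rot w 1 = w 0 := rfl

lemma rot_perp (w : E2) : ⟪w, rot w⟫ = 0 := by
  rw [inner2, rot_apply0, rot_apply1]; ring

lemma rot_ne {w : E2} (hw : w ≠ 0) : rot w ≠ 0 := by
  intro h
  apply hw
  apply eq_zero_of_coords
  · have := congrArg (fun z => z 1) h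
    simpa [rot_apply1] using this
  · have := congrArg (fun z => z 0) h
    have h2 : -(w 1) = 0 := by simpa [rot_apply0] using this
    linarith

lemma exists_perp (w : E2) : ∃ d : E2, d ≠ 0 ∧ ⟪w, d⟫ = 0 := by
  by_cases hw : w = 0
  · refine ⟨EuclideanSpace.single 0 (1:ℝ), ?_, by rw [hw]; exact inner_zero_left _⟩
    intro h
    have := congrArg (fun z => z 0) h
    simp [EuclideanSpace.single_apply] at this
  · exact ⟨rot w, rot_ne hw, rot_perp w⟩

lemma interior_line_empty {p d : E2} (hd : d ≠ 0) {S : Set E2}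
    (hS : ∀ y ∈ S, ⟪y - p, d⟫ = 0) : interior S = ∅ := by
  rw [Set.eq_empty_iff_forall_notMem]
  intro z hz
  obtain ⟨ε, hε, hball⟩ := Metric.isOpen_iff.1 isOpen_interior z hz
  have hzS : z ∈ S := interior_subset hz
  set z' := z + (ε/(2*‖d‖)) • d with hz'
  have hz'S : z' ∈ S := by
    apply interior_subset
    apply hball
    rw [mem_ball, dist_eq_norm, hz']
    have : z + (ε/(2*‖d‖)) • d - z = (ε/(2*‖d‖)) • d := by abel
    rw [this, norm_smul, Real.norm_eq_abs]
    have hdn : (0:ℝ) < ‖d‖ := norm_pos_iff.2 hd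
    rw [abs_of_pos (by positivity)]
    rw [div_mul_eq_mul_div]
    rw [div_lt_iff₀ (by positivity)]
    nlinarith
  have h1 := hS z hzS
  have h2 := hS z' hz'S
  rw [hz'] at h2
  have h3 : z + (ε/(2*‖d‖)) • d - p = (z - p) + (ε/(2*‖d‖)) • d := by abel
  rw [h3, inner_add_left, h1, real_inner_smul_left, real_inner_self_eq_norm_sq] at h2
  have hdn : (0:ℝ) < ‖d‖ := norm_pos_iff.2 hd
  have : ε/(2*‖d‖) * ‖d‖^2 > 0 := by positivity
  linarith

lemma interior_hull_pair (p q : E2) : interior (convexHull ℝ ({p, q} : Set E2)) = ∅ := by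
  obtain ⟨d, hd, hperp⟩ := exists_perp (q - p)
  apply interior_line_empty hd
  intro y hy
  have hsub : ({p, q} : Set E2) ⊆ {y : E2 | ⟪y - p, d⟫ = 0} := by
    rintro x (rfl | rfl)
    · simp
    · simpa using hperp
  have hconv : Convex ℝ {y : E2 | ⟪y - p, d⟫ = 0} := by
    intro x hx y' hy' a b ha hb hab
    simp only [Set.mem_setOf_eq] at hx hy' ⊢
    have hb' : b = 1 - a := by linarith
    subst hb'
    have : a • x + (1-a) • y' - p = a • (x - p) + (1-a) • (y' - p) := by module
    rw [this, inner_add_left, real_inner_smul_left, real_inner_smul_left, hx, hy']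
    ring
  exact convexHull_min hsub hconv hy

lemma nondeg01 (v : Fin 4 → E2)
    (hint : (interior (convexHull ℝ (Set.range v))).Nonempty)
    (horth : ∀ i : Fin 4, ⟪v (i + 1) - v i, v (i - 1) - v i⟫ = 0) : v 0 ≠ v 1 := by
  intro h01
  have h2 := horth 2
  have h3 := horth 3
  rw [show (2 + 1 : Fin 4) = 3 from by decide, show (2 - 1 : Fin 4) = 1 from by decide] at h2
  rw [show (3 + 1 : Fin 4) = 0 from by decide, show (3 - 1 : Fin 4) = 2 from by decide] at h3
  -- v 2 = v 3
  have hz : ⟪v 2 - v 3, v 2 - v 3⟫ = (0:ℝ) := by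
    have hw : v 2 - v 3 = (v 0 - v 3) - (v 0 - v 2) := by abel
    have hstep : ⟪v 2 - v 3, v 2 - v 3⟫ = ⟪v 0 - v 3, v 2 - v 3⟫ - ⟪v 0 - v 2, v 2 - v 3⟫ := by
      rw [← inner_sub_left, ← hw]
    rw [hstep, h3]
    have h4 : ⟪v 0 - v 2, v 2 - v 3⟫ = -⟪v 3 - v 2, v 1 - v 2⟫ := by
      rw [h01, show v 2 - v 3 = -(v 3 - v 2) from by abel, inner_neg_right, real_inner_comm]
    rw [h4, h2]
    ring
  have h23 : v 2 = v 3 := by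
    have := inner_self_eq_zero.1 hz
    rwa [sub_eq_zero] at this
  -- range v ⊆ {v 0, v 2}
  have hsub : Set.range v ⊆ ({v 0, v 2} : Set E2) := by
    rintro _ ⟨i, rfl⟩
    fin_cases i
    · left; rfl
    · left; exact h01.symm
    · right; rfl
    · right; exact Set.mem_singleton_iff.2 h23.symm
  obtain ⟨z, hz'⟩ := hint
  have hmono : interior (convexHull ℝ (Set.range v)) ⊆
      interior (convexHull ℝ ({v 0, v 2} : Set E2)) :=
    interior_mono (convexHull_mono hsub)
  have := hmono hz'
  rw [interior_hull_pair] at this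
  exact this

lemma nondeg (v : Fin 4 → E2)
    (hint : (interior (convexHull ℝ (Set.range v))).Nonempty)
    (horth : ∀ i : Fin 4, ⟪v (i + 1) - v i, v (i - 1) - v i⟫ = 0) :
    ∀ i : Fin 4, v i ≠ v (i + 1) := by
  intro i
  set w : Fin 4 → E2 := fun j => v (j + i) with hw
  have hrange : Set.range w = Set.range v := by
    rw [hw]
    have : (fun j => v (j + i)) = v ∘ (fun j : Fin 4 => j + i) := rfl
    rw [this]
    apply Function.Surjective.range_comp
    intro j
    exact ⟨j - i, by abel⟩
  have hint' : (interior (convexHull ℝ (Set.range w))).Nonempty := by rw [hrange]; exact hint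
  have horth' : ∀ j : Fin 4, ⟪w (j + 1) - w j, w (j - 1) - w j⟫ = 0 := by
    intro j
    rw [hw]
    simp only []
    rw [show j + 1 + i = (j + i) + 1 from by abel, show j - 1 + i = (j + i) - 1 from by abel]
    exact horth (j + i)
  have h01 := nondeg01 w hint' horth'
  rw [hw] at h01
  simp only [] at h01
  rw [zero_add] at h01
  intro h
  apply h01
  rw [h]
  congr 1
  abel

lemma para (v : Fin 4 → E2) (hA : v 1 - v 0 ≠ 0) (hB : v 3 - v 0 ≠ 0)
    (horth : ∀ i : Fin 4, ⟪v (i + 1) - v i, v (i - 1) - v i⟫ = 0) :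
    v 0 + v 2 = v 1 + v 3 := by
  have hAB := horth 0
  rw [show (0 + 1 : Fin 4) = 1 from by decide, show (0 - 1 : Fin 4) = 3 from by decide] at hAB
  have h1 := horth 1
  rw [show (1 + 1 : Fin 4) = 2 from by decide, show (1 - 1 : Fin 4) = 0 from by decide] at h1
  have h3 := horth 3
  rw [show (3 + 1 : Fin 4) = 0 from by decide, show (3 - 1 : Fin 4) = 2 from by decide] at h3
  set wv := v 2 + v 0 - v 1 - v 3 with hwv
  have hwA : ⟪v 1 - v 0, wv⟫ = 0 := by
    have hsplit : wv = (v 2 - v 1) - (v 3 - v 0) := by rw [hwv]; abel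
    rw [hsplit, inner_sub_right, hAB, real_inner_comm]
    have : ⟪v 2 - v 1, v 1 - v 0⟫ = -⟪v 2 - v 1, v 0 - v 1⟫ := by
      rw [show v 1 - v 0 = -(v 0 - v 1) from by abel, inner_neg_right]
    rw [this, h1]
    ring
  have hwB : ⟪v 3 - v 0, wv⟫ = 0 := by
    have hsplit : wv = (v 2 - v 3) - (v 1 - v 0) := by rw [hwv]; abel
    rw [hsplit, inner_sub_right]
    have e1 : ⟪v 3 - v 0, v 2 - v 3⟫ = -⟪v 0 - v 3, v 2 - v 3⟫ := by
      rw [show v 3 - v 0 = -(v 0 - v 3) from by abel, inner_neg_left]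
    have e2 : ⟪v 3 - v 0, v 1 - v 0⟫ = ⟪v 1 - v 0, v 3 - v 0⟫ := real_inner_comm _ _
    rw [e1, e2, h3, hAB]
    ring
  have hw0 : wv = 0 := solve2 (det_ne_of_orth hA hB hAB) hwA hwB
  have : v 0 + v 2 - (v 1 + v 3) = wv := by rw [hwv]; abel
  rw [← sub_eq_zero, this, hw0]




-- supporting functional at a frontier point
lemma support_at {Q : Set E2} (hconv : Convex ℝ Q) (hint : (interior Q).Nonempty)
    {x : E2} (hx : x ∉ interior Q) :
    ∃ N : E2, N ≠ 0 ∧ (∀ y ∈ Q, ⟪y - x, N⟫ ≤ 0) ∧ ∀ z ∈ interior Q, ⟪z - x, N⟫ < 0 := by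
  obtain ⟨f, hf⟩ := geometric_hahn_banach_open_point hconv.interior isOpen_interior hx
  set N := (InnerProductSpace.toDual ℝ E2).symm f with hN
  have hNy : ∀ y : E2, ⟪y, N⟫ = f y := by
    intro y
    rw [real_inner_comm]
    exact InnerProductSpace.toDual_symm_apply
  obtain ⟨z0, hz0⟩ := hint
  have hNne : N ≠ 0 := by
    intro h
    have h1 := hf z0 hz0
    have h2 : f z0 = ⟪z0, N⟫ := (hNy z0).symm
    rw [h, inner_zero_right] at h2
    have h3 : f x = ⟪x, N⟫ := (hNy x).symm
    rw [h, inner_zero_right] at h3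
    rw [h2, h3] at h1
    exact lt_irrefl _ h1
  refine ⟨N, hNne, ?_, ?_⟩
  · intro y hy
    rw [inner_sub_left, hNy, hNy, sub_nonpos]
    by_contra hgt
    push_neg at hgt
    have hz0x : f z0 < f x := hf z0 hz0
    set g := f y - f z0 with hg
    have hgpos : 0 < g := by rw [hg]; linarith
    set lam := (f x - f z0)/g with hlam
    have hlam0 : 0 < lam := by apply div_pos <;> linarith
    have hlam1 : lam < 1 := by rw [hlam, div_lt_one hgpos]; linarith
    have hmem : (1 - lam) • z0 + lam • y ∈ interior Q := by
      exact hconv.combo_interior_self_mem_interior hz0 hy (by linarith) (by linarith)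
        (by ring)
    have := hf _ hmem
    rw [map_add, map_smul, map_smul] at this
    simp only [smul_eq_mul] at this
    have hev : (1 - lam) * f z0 + lam * f y = f x := by
      rw [hlam]
      field_simp
      ring
    linarith
  · intro z hz
    rw [inner_sub_left, hNy, hNy, sub_neg]
    exact hf z hz

-- contact points are vertices
lemma contact_in_range (v : Fin 4 → E2) (c : E2) (R : ℝ)
    (hsub : convexHull ℝ (Set.range v) ⊆ closedBall c R)
    {t : E2} (ht : t ∈ convexHull ℝ (Set.range v)) (htR : ‖t - c‖ = R) :
    t ∈ Set.range v := by
  apply extremePoints_convexHull_subset (𝕜 := ℝ)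
  rw [mem_extremePoints]
  refine ⟨ht, ?_⟩
  intro x1 hx1 x2 hx2 hseg
  obtain ⟨a, b, ha, hb, hab, habt⟩ := hseg
  have hR0 : 0 ≤ R := htR ▸ norm_nonneg _
  have h1 : ‖x1 - c‖ ≤ R := by
    have := hsub hx1; rwa [mem_closedBall, dist_eq_norm] at this
  have h2 : ‖x2 - c‖ ≤ R := by
    have := hsub hx2; rwa [mem_closedBall, dist_eq_norm] at this
  have hcomb : t - c = a • (x1 - c) + b • (x2 - c) := by
    rw [← habt]
    have hb' : b = 1 - a := by linarith
    subst hb'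
    module
  have hexp : R^2 = a^2*‖x1 - c‖^2 + 2*(a*b)*⟪x1 - c, x2 - c⟫ + b^2*‖x2 - c‖^2 := by
    rw [← htR, hcomb, norm_add_sq_real, real_inner_smul_left, real_inner_smul_right,
      norm_smul, norm_smul, mul_pow, mul_pow, Real.norm_eq_abs, Real.norm_eq_abs,
      sq_abs, sq_abs]
    ring
  have hCS : ⟪x1 - c, x2 - c⟫ ≤ ‖x1 - c‖ * ‖x2 - c‖ := real_inner_le_norm _ _
  have hprod : ‖x1 - c‖ * ‖x2 - c‖ ≤ R^2 := by
    nlinarith [norm_nonneg (x1 - c), norm_nonneg (x2 - c)]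
  have hkey : a^2*(R^2 - ‖x1 - c‖^2) + 2*(a*b)*(R^2 - ⟪x1 - c, x2 - c⟫)
      + b^2*(R^2 - ‖x2 - c‖^2) = 0 := by
    have hab2 : (a + b)^2 = 1 := by rw [hab]; norm_num
    nlinarith [hexp]
  have hn1 : 0 ≤ R^2 - ‖x1 - c‖^2 := by nlinarith [norm_nonneg (x1 - c)]
  have hn2 : 0 ≤ R^2 - ‖x2 - c‖^2 := by nlinarith [norm_nonneg (x2 - c)]
  have hn3 : 0 ≤ R^2 - ⟪x1 - c, x2 - c⟫ := by nlinarith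
  have ht1 : R^2 - ‖x1 - c‖^2 = 0 := by
    nlinarith [mul_pos ha ha, mul_pos hb hb, mul_pos ha hb, hn1, hn2, hn3]
  have ht2 : R^2 - ‖x2 - c‖^2 = 0 := by
    nlinarith [mul_pos ha ha, mul_pos hb hb, mul_pos ha hb, hn1, hn2, hn3]
  have ht3 : R^2 - ⟪x1 - c, x2 - c⟫ = 0 := by
    nlinarith [mul_pos ha ha, mul_pos hb hb, mul_pos ha hb, hn1, hn2, hn3]
  have hdiff : ‖x1 - x2‖^2 = 0 := by
    rw [show x1 - x2 = (x1 - c) - (x2 - c) from by abel, norm_sub_sq_real]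
    nlinarith
  have hxx : x1 = x2 := by
    have h0 : ‖x1 - x2‖ = 0 := pow_eq_zero_iff (by norm_num) |>.1 hdiff
    exact sub_eq_zero.1 (norm_eq_zero.1 h0)
  constructor
  · subst hxx
    have : t = x1 := by
      rw [← habt]
      have hb' : b = 1 - a := by linarith
      subst hb'
      module
    exact this.symm
  · subst hxx
    have : t = x1 := by
      rw [← habt]
      have hb' : b = 1 - a := by linarith
      subst hb'
      module
    exact this.symm

-- ball constraint kill
lemma kill_ball {c t e : E2} {R δ : ℝ} (hδ : 0 < δ) (he : e ≠ 0) (htR : ‖t - c‖ = R)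
    (hmem : dist (t + δ • e) c ≤ R) : ⟪t - c, e⟫ < 0 := by
  have he2 : 0 < ‖e‖^2 := pow_pos (norm_pos_iff.2 he) 2
  rw [dist_eq_norm] at hmem
  have heq : t + δ • e - c = (t - c) + δ • e := by abel
  rw [heq] at hmem
  have hsq : ‖(t - c) + δ • e‖^2 ≤ R^2 := by
    have h0 : 0 ≤ ‖(t - c) + δ • e‖ := norm_nonneg _
    have hR0 : 0 ≤ R := htR ▸ norm_nonneg _
    nlinarith
  rw [norm_add_sq_real, htR, real_inner_smul_right, norm_smul, Real.norm_eq_abs, mul_pow,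
    sq_abs] at hsq
  nlinarith [mul_pos (mul_pos hδ hδ) he2]

-- two open half planes intersect unless antiparallel
lemma antiparallel {ν ν' : E2} (hν : ν ≠ 0) (hν' : ν' ≠ 0)
    (hno : ¬∃ e : E2, 0 < ⟪e, ν⟫ ∧ 0 < ⟪e, ν'⟫) : ∃ α : ℝ, α < 0 ∧ ν' = α • ν := by
  set d := rot ν with hd
  have hdne : d ≠ 0 := rot_ne hν
  have hperp : ⟪ν, d⟫ = 0 := rot_perp ν
  have hexp := basis_expand hν hdne hperp ν'
  set a := ⟪ν', ν⟫/‖ν‖^2 with ha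
  set b := ⟪ν', d⟫/‖d‖^2 with hb
  have hν2 : (0:ℝ) < ‖ν‖^2 := pow_pos (norm_pos_iff.2 hν) 2
  have hd2 : (0:ℝ) < ‖d‖^2 := pow_pos (norm_pos_iff.2 hdne) 2
  have hb0 : b = 0 := by
    by_contra hbne
    apply hno
    set K := (|a| * ‖ν‖^2 + 1)/(b^2*‖d‖^2) with hK
    have hKpos : 0 < K := by
      apply div_pos
      · positivity
      · positivity
    have hdν : ⟪d, ν⟫ = (0:ℝ) := by rw [real_inner_comm]; exact hperp
    have hinner1 : ⟪ν + (b*K) • d, ν⟫ = ‖ν‖^2 := by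
      rw [inner_add_left, real_inner_self_eq_norm_sq, real_inner_smul_left, hdν]
      ring
    have hinner2 : ⟪ν + (b*K) • d, ν'⟫ = a*‖ν‖^2 + b*K*(b*‖d‖^2) := by
      conv_lhs => rw [hexp]
      simp only [inner_add_left, inner_add_right, real_inner_smul_left, real_inner_smul_right,
        real_inner_self_eq_norm_sq, hdν, hperp]
      ring
    have hbK : b*K*(b*‖d‖^2) = |a| * ‖ν‖^2 + 1 := by
      rw [hK]
      field_simp
    have habs : a*‖ν‖^2 + |a| * ‖ν‖^2 ≥ 0 := by
      rcases abs_cases a with ⟨h1, h2⟩ | ⟨h1, h2⟩ <;> nlinarith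
    refine ⟨ν + (b*K) • d, ?_, ?_⟩
    · rw [hinner1]; exact hν2
    · rw [hinner2, hbK]; linarith
  rw [hb0, zero_smul, add_zero] at hexp
  refine ⟨a, ?_, hexp⟩
  rcases lt_trichotomy a 0 with h | h | h
  · exact h
  · exfalso; apply hν'; rw [hexp, h, zero_smul]
  · exfalso
    apply hno
    refine ⟨ν, by rw [real_inner_self_eq_norm_sq]; positivity, ?_⟩
    rw [hexp, real_inner_smul_right, real_inner_self_eq_norm_sq]
    positivity

lemma perp_collinear {ν x y : E2} (hν : ν ≠ 0) (hx : ⟪x, ν⟫ = 0) (hy : ⟪y, ν⟫ = 0)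
    (hx0 : x ≠ 0) : ∃ μ : ℝ, y = μ • x := by
  set d := rot ν with hd
  have hdne : d ≠ 0 := rot_ne hν
  have hperp : ⟪ν, d⟫ = 0 := rot_perp ν
  have hex := basis_expand hν hdne hperp x
  have hey := basis_expand hν hdne hperp y
  rw [hx] at hex
  rw [hy] at hey
  simp only [zero_div, zero_smul, zero_add] at hex hey
  set α := ⟪x, d⟫/‖d‖^2 with hα
  set β := ⟪y, d⟫/‖d‖^2 with hβ
  have hbx : α ≠ 0 := by
    intro h
    apply hx0
    rw [hex, h, zero_smul]
  refine ⟨β/α, ?_⟩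
  rw [hey, hex, smul_smul]
  congr 1
  field_simp

lemma line_convex (p d : E2) : Convex ℝ {y : E2 | ⟪y - p, d⟫ = 0} := by
  intro x hx y' hy' a b ha hb hab
  simp only [Set.mem_setOf_eq] at hx hy' ⊢
  have hb' : b = 1 - a := by linarith
  subst hb'
  have : a • x + (1-a) • y' - p = a • (x - p) + (1-a) • (y' - p) := by module
  rw [this, inner_add_left, real_inner_smul_left, real_inner_smul_left, hx, hy']
  ring



lemma Rpos {Q : Set E2} (hint : (interior Q).Nonempty) {c : E2} {R : ℝ}
    (hsub : Q ⊆ closedBall c R) : 0 < R := by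
  obtain ⟨z, hz⟩ := hint
  obtain ⟨ε, hε, hball⟩ := Metric.isOpen_iff.1 isOpen_interior z hz
  set w : E2 := EuclideanSpace.single (0 : Fin 2) (1:ℝ) with hw
  have hwn : ‖w‖ = 1 := by rw [hw, EuclideanSpace.norm_single]; norm_num
  have hz2 : z + (ε/2) • w ∈ Q := by
    apply interior_subset
    apply hball
    rw [mem_ball, dist_eq_norm, show z + (ε/2) • w - z = (ε/2) • w from by abel,
      norm_smul, hwn, Real.norm_eq_abs, abs_of_pos (by positivity)]
    linarith
  have h1 : dist (z + (ε/2) • w) c ≤ R := hsub hz2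
  have h2 : dist z c ≤ R := hsub (interior_subset hz)
  have htri : dist (z + (ε/2) • w) z ≤ dist (z + (ε/2) • w) c + dist c z := dist_triangle _ _ _
  rw [dist_eq_norm, show z + (ε/2) • w - z = (ε/2) • w from by abel, norm_smul, hwn,
    Real.norm_eq_abs, abs_of_pos (by positivity), dist_comm c z] at htri
  linarith

lemma exists_contact {Q : Set E2} (hcomp : IsCompact Q) (hne : Q.Nonempty) {c : E2} {R : ℝ}
    (hsub : Q ⊆ closedBall c R) (hmin : ∀ c' R', Q ⊆ closedBall c' R' → R ≤ R') :
    ∃ x, x ∈ Q ∧ ‖x - c‖ = R := by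
  by_contra h
  push_neg at h
  have hcont : ContinuousOn (fun x : E2 => ‖x - c‖) Q :=
    ((continuous_id.sub continuous_const).norm).continuousOn
  obtain ⟨x0, hx0Q, hx0max⟩ := hcomp.exists_isMaxOn hne hcont
  have hle : ‖x0 - c‖ ≤ R := by
    have := hsub hx0Q; rwa [mem_closedBall, dist_eq_norm] at this
  have hlt : ‖x0 - c‖ < R := lt_of_le_of_ne hle (h x0 hx0Q)
  have hsub' : Q ⊆ closedBall c ‖x0 - c‖ := by
    intro y hy
    rw [mem_closedBall, dist_eq_norm]
    exact hx0max hy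
  have := hmin c ‖x0 - c‖ hsub'
  linarith

lemma center_mem {Q : Set E2} (hconv : Convex ℝ Q) (hclosed : IsClosed Q) (hne : Q.Nonempty)
    {c : E2} {R : ℝ} (hsub : Q ⊆ closedBall c R) (hmin : ∀ c' R', Q ⊆ closedBall c' R' → R ≤ R')
    (hR0 : 0 < R) : c ∈ Q := by
  by_contra hc
  obtain ⟨p, hpQ, hpmin⟩ := exists_norm_eq_iInf_of_complete_convex hne hclosed.isComplete hconv c
  have hproj : ∀ w ∈ Q, ⟪c - p, w - p⟫ ≤ 0 :=
    (norm_eq_iInf_iff_real_inner_le_zero hconv hpQ).1 hpmin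
  have hD : 0 < ‖c - p‖ := by
    rw [norm_pos_iff, sub_ne_zero]
    intro h; exact hc (h ▸ hpQ)
  have hyb : ∀ y ∈ Q, ‖y - p‖^2 ≤ R^2 - ‖c - p‖^2 := by
    intro y hy
    have h1 : ‖y - c‖ ≤ R := by have := hsub hy; rwa [mem_closedBall, dist_eq_norm] at this
    have h2 := hproj y hy
    have hexp : ‖y - p‖^2 = ‖y - c‖^2 + 2*⟪y - c, c - p⟫ + ‖c - p‖^2 := by
      rw [show y - p = (y - c) + (c - p) from by abel, norm_add_sq_real]
    have hsplit : ⟪y - c, c - p⟫ = ⟪c - p, y - p⟫ - ‖c - p‖^2 := by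
      rw [real_inner_comm, show y - c = (y - p) - (c - p) from by abel, inner_sub_right,
        real_inner_self_eq_norm_sq]
    nlinarith [norm_nonneg (y - c)]
  have hR'0 : 0 ≤ R^2 - ‖c - p‖^2 := by
    obtain ⟨y0, hy0⟩ := hne
    have := hyb y0 hy0
    nlinarith [sq_nonneg ‖y0 - p‖]
  have hsub' : Q ⊆ closedBall p (Real.sqrt (R^2 - ‖c - p‖^2)) := by
    intro y hy
    rw [mem_closedBall, dist_eq_norm, show ‖y - p‖ = Real.sqrt (‖y - p‖^2) from
      (Real.sqrt_sq (norm_nonneg _)).symm]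
    exact Real.sqrt_le_sqrt (hyb y hy)
  have hle := hmin p _ hsub'
  have hsq : (Real.sqrt (R^2 - ‖c - p‖^2))^2 = R^2 - ‖c - p‖^2 := Real.sq_sqrt hR'0
  nlinarith [Real.sqrt_nonneg (R^2 - ‖c - p‖^2)]

lemma center_mem_hull {Q : Set E2} (hconv : Convex ℝ Q) (hcomp : IsCompact Q) (hne : Q.Nonempty)
    {c : E2} {R : ℝ} (hsub : Q ⊆ closedBall c R) (hmin : ∀ c' R', Q ⊆ closedBall c' R' → R ≤ R')
    (hR0 : 0 < R) (hTfin : {x | x ∈ Q ∧ ‖x - c‖ = R}.Finite) :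
    c ∈ convexHull ℝ {x | x ∈ Q ∧ ‖x - c‖ = R} := by
  by_contra hc
  set T := {x | x ∈ Q ∧ ‖x - c‖ = R} with hT
  obtain ⟨f, u, hfc, hfT⟩ :=
    geometric_hahn_banach_point_closed (convex_convexHull ℝ T) (hTfin.isClosed_convexHull (𝕜 := ℝ)) hc
  set w := (InnerProductSpace.toDual ℝ E2).symm f with hwdef
  have hwy : ∀ y : E2, ⟪y, w⟫ = f y := fun y => by
    rw [real_inner_comm]; exact InnerProductSpace.toDual_symm_apply
  set δ := u - f c with hδ
  have hδpos : 0 < δ := by rw [hδ]; linarith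
  have hTineq : ∀ y ∈ T, δ < ⟪y - c, w⟫ := by
    intro y hy
    have := hfT y (subset_convexHull ℝ T hy)
    rw [inner_sub_left, hwy, hwy, hδ]
    linarith
  obtain ⟨y0, hy0⟩ : T.Nonempty := by
    obtain ⟨x, hx1, hx2⟩ := exists_contact hcomp hne hsub hmin
    exact ⟨x, hx1, hx2⟩
  have hwne : w ≠ 0 := by
    intro h
    have := hTineq y0 hy0
    rw [h, inner_zero_right] at this
    linarith
  have hw2 : 0 < ‖w‖ := norm_pos_iff.2 hwne
  have hw2sq : 0 < ‖w‖^2 := by positivity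
  set F := {y | y ∈ Q ∧ ⟪y - c, w⟫ ≤ δ/2} with hF
  have hFsub : F ⊆ Q := fun y hy => hy.1
  have hFclosed : IsClosed F := by
    have he : F = Q ∩ (fun y : E2 => ⟪y - c, w⟫) ⁻¹' (Set.Iic (δ/2)) := by
      ext y; simp [hF, Set.mem_setOf_eq]
    rw [he]
    exact hcomp.isClosed.inter (IsClosed.preimage
      (((continuous_id.sub continuous_const)).inner continuous_const) isClosed_Iic)
  have hFcomp : IsCompact F := hcomp.of_isClosed_subset hFclosed hFsub
  -- squared bound for points outside F
  have hbound2 : ∀ (ε : ℝ), 0 < ε → ε ≤ δ/(2*‖w‖^2) → ∀ y ∈ Q, ¬(⟪y - c, w⟫ ≤ δ/2) →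
      ‖y - (c + ε • w)‖^2 ≤ R^2 - ε*δ/2 := by
    intro ε hε hεle y hy hyF
    push_neg at hyF
    have h1 : ‖y - c‖ ≤ R := by have := hsub hy; rwa [mem_closedBall, dist_eq_norm] at this
    have hexp : ‖y - (c + ε • w)‖^2 = ‖y - c‖^2 - 2*ε*⟪y - c, w⟫ + ε^2*‖w‖^2 := by
      rw [show y - (c + ε • w) = (y - c) - ε • w from by abel, norm_sub_sq_real,
        real_inner_smul_right, norm_smul, Real.norm_eq_abs, mul_pow, sq_abs]
      ring
    have hkey : ε*(2*‖w‖^2) ≤ δ := (le_div_iff₀ (by positivity)).1 hεle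
    have hεw : ε^2*‖w‖^2 ≤ ε*δ/2 := by nlinarith [mul_le_mul_of_nonneg_left hkey hε.le]
    nlinarith [norm_nonneg (y - c), hR0.le]
  rcases F.eq_empty_or_nonempty with hFe | hFne
  · -- F empty : every point of Q is far
    set ε := δ/(2*‖w‖^2) with hε
    have hεpos : 0 < ε := by positivity
    have hQb : ∀ y ∈ Q, ‖y - (c + ε • w)‖^2 ≤ R^2 - ε*δ/2 := by
      intro y hy
      apply hbound2 ε hεpos le_rfl y hy
      intro hle
      have : y ∈ F := ⟨hy, hle⟩
      rw [hFe] at this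
      exact this
    have hnn : 0 ≤ R^2 - ε*δ/2 := by
      obtain ⟨z0, hz0⟩ := hne
      have := hQb z0 hz0
      nlinarith [sq_nonneg ‖z0 - (c + ε • w)‖]
    have hsub' : Q ⊆ closedBall (c + ε • w) (Real.sqrt (R^2 - ε*δ/2)) := by
      intro y hy
      rw [mem_closedBall, dist_eq_norm, show ‖y - (c + ε • w)‖ =
        Real.sqrt (‖y - (c + ε • w)‖^2) from (Real.sqrt_sq (norm_nonneg _)).symm]
      exact Real.sqrt_le_sqrt (hQb y hy)
    have hle := hmin _ _ hsub'
    have hlt : Real.sqrt (R^2 - ε*δ/2) < R := by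
      rw [Real.sqrt_lt' hR0]
      nlinarith
    linarith
  · -- F nonempty : take the farthest point of F
    have hcont : ContinuousOn (fun x : E2 => ‖x - c‖) F :=
      ((continuous_id.sub continuous_const).norm).continuousOn
    obtain ⟨y1, hy1F, hy1max⟩ := hFcomp.exists_isMaxOn hFne hcont
    set M := ‖y1 - c‖ with hM
    have hM0 : 0 ≤ M := norm_nonneg _
    have hMR : M < R := by
      have hle : M ≤ R := by
        have := hsub (hFsub hy1F); rwa [mem_closedBall, dist_eq_norm] at this
      rcases lt_or_eq_of_le hle with h | h
      · exact h
      · exfalso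
        have hy1T : y1 ∈ T := ⟨hFsub hy1F, h⟩
        have := hTineq y1 hy1T
        have := hy1F.2
        linarith
    set ε := min ((R - M)/(2*(‖w‖+1))) (δ/(2*‖w‖^2)) with hε
    have hεpos : 0 < ε := by
      apply lt_min
      · apply div_pos
        · linarith
        · positivity
      · positivity
    have hε1 : ε ≤ (R - M)/(2*(‖w‖+1)) := min_le_left _ _
    have hε2 : ε ≤ δ/(2*‖w‖^2) := min_le_right _ _
    have hεw : ε * ‖w‖ ≤ (R - M)/2 := by
      have h1 : ε * ‖w‖ ≤ (R - M)/(2*(‖w‖+1)) * ‖w‖ :=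
        mul_le_mul_of_nonneg_right hε1 (norm_nonneg w)
      have h2 : (R - M)/(2*(‖w‖+1)) * ‖w‖ ≤ (R - M)/2 := by
        rw [div_mul_eq_mul_div, div_le_div_iff₀ (by positivity) (by norm_num)]
        nlinarith [norm_nonneg w]
      linarith
    have hball : ∀ y ∈ Q, dist y (c + ε • w) ≤
        max ((R + M)/2) (Real.sqrt (R^2 - ε*δ/2)) := by
      intro y hy
      by_cases hyF : ⟪y - c, w⟫ ≤ δ/2
      · -- y ∈ F
        have hyFm : y ∈ F := ⟨hy, hyF⟩
        have h1 : ‖y - c‖ ≤ M := hy1max hyFm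
        have h2 : dist y (c + ε • w) ≤ ‖y - c‖ + ε * ‖w‖ := by
          rw [dist_eq_norm, show y - (c + ε • w) = (y - c) - ε • w from by abel]
          calc ‖(y - c) - ε • w‖ ≤ ‖y - c‖ + ‖ε • w‖ := norm_sub_le _ _
            _ = ‖y - c‖ + ε * ‖w‖ := by
                rw [norm_smul, Real.norm_eq_abs, abs_of_pos hεpos]
        refine le_trans (le_trans h2 ?_) (le_max_left _ _)
        linarith
      · have := hbound2 ε hεpos hε2 y hy hyF
        refine le_trans ?_ (le_max_right _ _)
        rw [dist_eq_norm, show ‖y - (c + ε • w)‖ =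
          Real.sqrt (‖y - (c + ε • w)‖^2) from (Real.sqrt_sq (norm_nonneg _)).symm]
        exact Real.sqrt_le_sqrt this
    have hle := hmin (c + ε • w) _ (fun y hy => mem_closedBall.2 (hball y hy))
    have hlt1 : (R + M)/2 < R := by linarith
    have hlt2 : Real.sqrt (R^2 - ε*δ/2) < R := by
      rw [Real.sqrt_lt' hR0]
      nlinarith
    have : max ((R + M)/2) (Real.sqrt (R^2 - ε*δ/2)) < R := max_lt hlt1 hlt2
    linarith

lemma condC {Q : Set E2} (hclosed : IsClosed Q) {c : E2} {R : ℝ} (hR0 : 0 ≤ R)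
    {s : Finset E2} (hunits : ∀ r ∈ s, ‖r‖ = 1)
    (hcov : ∀ x ∈ Q, ∃ r ∈ s, x + R • r ∈ Q)
    (e : E2) (he : ∀ ε : ℝ, 0 < ε → ∃ δ : ℝ, 0 < δ ∧ δ ≤ ε ∧ c + δ • e ∈ Q) :
    ∃ tt : E2, ‖tt - c‖ = R ∧ tt ∈ Q ∧
      ∀ ε : ℝ, 0 < ε → ∃ δ : ℝ, 0 < δ ∧ δ ≤ ε ∧ tt + δ • e ∈ Q := by
  have hd : ∀ n : ℕ, ∃ δ : ℝ, 0 < δ ∧ δ ≤ 1/(n+1) ∧ c + δ • e ∈ Q :=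
    fun n => he (1/(n+1)) (by positivity)
  choose δf hδ1 hδ2 hδ3 using hd
  have hr : ∀ n : ℕ, ∃ r ∈ s, (c + δf n • e) + R • r ∈ Q := fun n => hcov _ (hδ3 n)
  choose rf hr1 hr2 using hr
  obtain ⟨y, hy⟩ := Finite.exists_infinite_fiber (fun n : ℕ => (⟨rf n, hr1 n⟩ : {x // x ∈ s}))
  have hyInf : Set.Infinite {n : ℕ | rf n = y.1} := by
    rw [← Set.infinite_coe_iff]
    have hset : (fun n : ℕ => (⟨rf n, hr1 n⟩ : {x // x ∈ s})) ⁻¹' {y} = {n : ℕ | rf n = y.1} := by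
      ext n
      simp [Subtype.ext_iff]
    rwa [hset] at hy
  have hrb : y.1 ∈ s := y.2
  have hsmall : ∀ ε : ℝ, 0 < ε → ∃ n, rf n = y.1 ∧ δf n ≤ ε := by
    intro ε hε
    obtain ⟨N, hN⟩ := exists_nat_one_div_lt (ε := ε) hε
    obtain ⟨n, hn, hnN⟩ := hyInf.exists_gt N
    refine ⟨n, hn, ?_⟩
    have h1 : (1:ℝ)/(n+1) ≤ 1/(N+1) := by
      apply one_div_le_one_div_of_le
      · positivity
      · have : (N:ℝ) ≤ n := by exact_mod_cast hnN.le
        linarith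
    have := hδ2 n
    linarith
  refine ⟨c + R • y.1, ?_, ?_, ?_⟩
  · rw [show c + R • y.1 - c = R • y.1 from by abel, norm_smul, hunits y.1 hrb,
      Real.norm_eq_abs, abs_of_nonneg hR0, mul_one]
  · rw [← hclosed.closure_eq]
    rw [Metric.mem_closure_iff]
    intro ε hε
    obtain ⟨n, hn, hδn⟩ := hsmall (ε/(2*(‖e‖+1))) (by positivity)
    refine ⟨c + δf n • e + R • y.1, ?_, ?_⟩
    · have h := hr2 n
      rwa [hn] at h
    · rw [dist_eq_norm, show c + R • y.1 - (c + δf n • e + R • y.1) = -(δf n • e) from by abel,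
        norm_neg, norm_smul, Real.norm_eq_abs, abs_of_pos (hδ1 n)]
      have hne : ‖e‖ ≤ ‖e‖ + 1 := by linarith
      have h2 : δf n * ‖e‖ ≤ (ε/(2*(‖e‖+1))) * (‖e‖+1) := by
        apply mul_le_mul hδn hne (norm_nonneg e)
        positivity
      have h3 : (ε/(2*(‖e‖+1))) * (‖e‖+1) = ε/2 := by field_simp
      rw [h3] at h2
      linarith
  · intro ε hε
    obtain ⟨n, hn, hδn⟩ := hsmall ε hε
    refine ⟨δf n, hδ1 n, hδn, ?_⟩
    have h := hr2 n
    rw [hn] at h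
    rw [show c + R • y.1 + δf n • e = c + δf n • e + R • y.1 from by abel]
    exact h




-- ### helper: norm of combination of orthogonal vectors
lemma norm_combo {A B : E2} (hAB : ⟪A, B⟫ = 0) (α β : ℝ) :
    ‖α • A + β • B‖^2 = α^2 * ‖A‖^2 + β^2 * ‖B‖^2 := by
  rw [norm_add_sq_real, real_inner_smul_left, real_inner_smul_right, hAB, norm_smul, norm_smul,
    mul_pow, mul_pow, Real.norm_eq_abs, Real.norm_eq_abs, sq_abs, sq_abs]
  ring

lemma norm_le_of_sq_le {x : E2} {r : ℝ} (hr : 0 ≤ r) (h : ‖x‖^2 ≤ r^2) : ‖x‖ ≤ r := by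
  nlinarith [norm_nonneg x]

-- ### Part A main
lemma partA (v : Fin 4 → E2) (Q : Set E2) (hQ : Q = convexHull ℝ (Set.range v))
    (hA : v 1 - v 0 ≠ 0) (hB : v 3 - v 0 ≠ 0)
    (hAB : ⟪v 1 - v 0, v 3 - v 0⟫ = 0)
    (hpar : v 0 + v 2 = v 1 + v 3)
    (c : E2) (R : ℝ) (hcirc : IsCircumball Q c R) :
    iq Q R = 4 := by
  classical
  set A := v 1 - v 0 with hAdef
  set B := v 3 - v 0 with hBdef
  have hconv : Convex ℝ Q := by rw [hQ]; exact convex_convexHull ℝ _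
  have hvmem : ∀ i, v i ∈ Q := by
    intro i; rw [hQ]; exact subset_convexHull ℝ _ ⟨i, rfl⟩
  have hdet := det_ne_of_orth hA hB hAB
  have ha : (0:ℝ) < ‖A‖ := norm_pos_iff.2 hA
  have hb : (0:ℝ) < ‖B‖ := norm_pos_iff.2 hB
  -- membership characterization
  have hmem : ∀ x : E2, x ∈ Q ↔ ∃ s t : ℝ, 0 ≤ s ∧ s ≤ 1 ∧ 0 ≤ t ∧ t ≤ 1 ∧
      x = v 0 + s • A + t • B := by
    intro x
    constructor
    · intro hx; rw [hQ] at hx; exact box_rep hpar hx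
    · rintro ⟨s, t, hs0, hs1, ht0, ht1, rfl⟩
      exact box_mem hconv (hvmem 0) (hvmem 1) (hvmem 2) (hvmem 3) hpar hs0 hs1 ht0 ht1
  -- norms
  have hApB : ‖A + B‖^2 = ‖A‖^2 + ‖B‖^2 := by
    rw [norm_add_sq_real, hAB]; ring
  have hAmB : ‖A - B‖ = ‖A + B‖ := by
    have h1 : ‖A - B‖^2 = ‖A + B‖^2 := by
      rw [norm_sub_sq_real, norm_add_sq_real, hAB]; ring
    nlinarith [norm_nonneg (A - B), norm_nonneg (A + B)]
  have hd : (0:ℝ) < ‖A + B‖ := by nlinarith [norm_nonneg (A + B)]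
  -- circumradius value
  have hv2' : v 2 = v 1 + v 3 - v 0 := by
    rw [eq_sub_iff_add_eq, add_comm]; exact hpar
  have hv20 : v 2 - v 0 = A + B := by rw [hv2', hAdef, hBdef]; abel
  have hRle : R ≤ ‖A + B‖/2 := by
    apply hcirc.2 (v 0 + (2⁻¹ : ℝ) • (A + B)) (‖A + B‖/2)
    intro x hx
    obtain ⟨s, t, hs0, hs1, ht0, ht1, rfl⟩ := (hmem x).1 hx
    rw [mem_closedBall, dist_eq_norm]
    have hxe : v 0 + s • A + t • B - (v 0 + (2⁻¹ : ℝ) • (A + B)) = (s - 2⁻¹) • A + (t - 2⁻¹) • B := by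
      module
    rw [hxe]
    apply norm_le_of_sq_le (by positivity)
    rw [norm_combo hAB]
    have h1 : (s - 2⁻¹)^2 ≤ (2⁻¹:ℝ)^2 := by nlinarith
    have h2 : (t - 2⁻¹)^2 ≤ (2⁻¹:ℝ)^2 := by nlinarith
    have := hApB
    nlinarith [sq_nonneg (s - 2⁻¹), sq_nonneg (t - 2⁻¹), ha, hb, sq_nonneg ‖A‖, sq_nonneg ‖B‖,
      mul_le_mul_of_nonneg_right h1 (sq_nonneg ‖A‖), mul_le_mul_of_nonneg_right h2 (sq_nonneg ‖B‖)]
  have hRge : ‖A + B‖ ≤ 2 * R := by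
    have h2 : dist (v 2) c ≤ R := hcirc.1 (hvmem 2)
    have h0 : dist (v 0) c ≤ R := hcirc.1 (hvmem 0)
    have htri : dist (v 2) (v 0) ≤ dist (v 2) c + dist c (v 0) := dist_triangle _ _ _
    rw [dist_eq_norm, hv20] at htri
    rw [dist_comm] at h0
    linarith
  have hRval : R = ‖A + B‖/2 := by linarith
  have hR0 : 0 < R := by rw [hRval]; linarith
  have hR2 : R^2 = (‖A‖^2 + ‖B‖^2)/4 := by rw [hRval]; rw [div_pow]; rw [hApB]; ring
  -- the four directions
  set d := ‖A + B‖ with hddef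
  have hdne : d ≠ 0 := ne_of_gt hd
  set u1 : E2 := d⁻¹ • (A + B) with hu1
  set u3 : E2 := d⁻¹ • (A - B) with hu3
  have hnu1 : ‖u1‖ = 1 := by
    rw [hu1, norm_smul, norm_inv, norm_norm]; field_simp; exact div_self hdne
  have hnu3 : ‖u3‖ = 1 := by
    rw [hu3, norm_smul, norm_inv, norm_norm, hAmB]; field_simp; exact div_self hdne
  have hhalf : R * d⁻¹ = 2⁻¹ := by
    rw [hRval]; field_simp; try ring
  have hRu1 : R • u1 = (2⁻¹:ℝ) • (A + B) := by
    rw [hu1, smul_smul, hhalf]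
  have hRu3 : R • u3 = (2⁻¹:ℝ) • (A - B) := by
    rw [hu3, smul_smul, hhalf]
  have hRu1' : R • (-u1) = (-2⁻¹:ℝ) • (A + B) := by
    rw [smul_neg, hRu1]; module
  have hRu3' : R • (-u3) = (-2⁻¹:ℝ) • (A - B) := by
    rw [smul_neg, hRu3]; module
  -- distinctness
  have hu1ne : u1 ≠ 0 := by intro h; rw [h] at hnu1; simp at hnu1
  have hu3ne : u3 ≠ 0 := by intro h; rw [h] at hnu3; simp at hnu3
  have hinj : Function.Injective (fun w : E2 => d⁻¹ • w) :=
    smul_right_injective E2 (inv_ne_zero hdne)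
  have key2 : ∀ w : E2, w + w = 0 → w = 0 := by
    intro w h
    have h3 : (2:ℝ) • w = 0 := by rw [two_smul]; exact h
    rcases smul_eq_zero.1 h3 with h4 | h4
    · norm_num at h4
    · exact h4
  have h13 : u1 ≠ u3 := by
    intro h
    rw [hu1, hu3] at h
    have h5 := hinj h
    apply hB
    apply key2
    have h6 : B + B = (A + B) - (A - B) := by abel
    rw [h6, h5, sub_self]
  have h1m3 : u1 ≠ -u3 := by
    intro h
    rw [hu1, hu3, ← smul_neg] at h
    have h5 := hinj h
    apply hA
    apply key2
    have h6 : A + A = -(A - B) + (A - B) := by rw [← h5]; abel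
    have h7 : -(A - B) + (A - B) = 0 := by abel
    exact h6.trans h7
  have h1m1 : u1 ≠ -u1 := by
    intro h
    apply hu1ne
    apply key2
    nth_rewrite 2 [h]
    abel
  have h3m3 : u3 ≠ -u3 := by
    intro h
    apply hu3ne
    apply key2
    nth_rewrite 2 [h]
    abel
  have hm13 : -u1 ≠ u3 := by
    intro h; exact h1m3 (by rw [← h]; module)
  have hm1m3 : -u1 ≠ -u3 := fun h => h13 (neg_injective h)
  -- the finset
  set s4 : Finset E2 := {u1, -u1, u3, -u3} with hs4
  have hcard4 : s4.card = 4 := by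
    rw [hs4]
    rw [Finset.card_insert_of_notMem (by simp [h1m1, h13, h1m3]),
      Finset.card_insert_of_notMem (by simp [hm13, hm1m3]),
      Finset.card_insert_of_notMem (by simp [h3m3]), Finset.card_singleton]
  have hunits : ∀ r ∈ s4, ‖r‖ = 1 := by
    intro r hr
    rw [hs4] at hr
    simp only [Finset.mem_insert, Finset.mem_singleton] at hr
    rcases hr with rfl | rfl | rfl | rfl
    · exact hnu1
    · rw [norm_neg]; exact hnu1
    · exact hnu3
    · rw [norm_neg]; exact hnu3
  have hcover : ∀ x ∈ Q, ∃ r ∈ s4, x + R • r ∈ Q := by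
    intro x hx
    obtain ⟨s, t, hs0, hs1, ht0, ht1, rfl⟩ := (hmem x).1 hx
    rcases le_or_gt s 2⁻¹ with hs | hs <;> rcases le_or_gt t 2⁻¹ with ht | ht
    · refine ⟨u1, by simp [hs4], ?_⟩
      rw [hRu1]
      refine (hmem _).2 ⟨s + 2⁻¹, t + 2⁻¹, by linarith, by linarith, by linarith, by linarith, ?_⟩
      module
    · refine ⟨u3, by simp [hs4], ?_⟩
      rw [hRu3]
      refine (hmem _).2 ⟨s + 2⁻¹, t - 2⁻¹, by linarith, by linarith, by linarith, by linarith, ?_⟩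
      module
    · refine ⟨-u3, by simp [hs4], ?_⟩
      rw [hRu3']
      refine (hmem _).2 ⟨s - 2⁻¹, t + 2⁻¹, by linarith, by linarith, by linarith, by linarith, ?_⟩
      module
    · refine ⟨-u1, by simp [hs4], ?_⟩
      rw [hRu1']
      refine (hmem _).2 ⟨s - 2⁻¹, t - 2⁻¹, by linarith, by linarith, by linarith, by linarith, ?_⟩
      module
  have h4mem : (4 : ℕ∞) ∈ {m : ℕ∞ | ∃ s : Finset E2, (s.card : ℕ∞) = m ∧
      (∀ r ∈ s, ‖r‖ = 1) ∧ ∀ x ∈ Q, ∃ r ∈ s, x + R • r ∈ Q} :=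
    ⟨s4, by rw [hcard4]; rfl, hunits, hcover⟩
  -- lower bound
  have hlower : ∀ m ∈ {m : ℕ∞ | ∃ s : Finset E2, (s.card : ℕ∞) = m ∧
      (∀ r ∈ s, ‖r‖ = 1) ∧ ∀ x ∈ Q, ∃ r ∈ s, x + R • r ∈ Q}, (4:ℕ∞) ≤ m := by
    rintro m ⟨s, hcard, hunit, hcov⟩
    rw [← hcard]
    have hge : 4 ≤ s.card := by
      by_contra hlt
      push_neg at hlt
      have hcard3 : s.card ≤ 3 := by omega
      refine core ‖A‖ ‖B‖ ha hb s (fun r => R * ⟪r, A⟫/‖A‖^2) (fun r => R * ⟪r, B⟫/‖B‖^2)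
        hcard3 ?_ ?_
      · intro i hi
        have hn1 : ‖i‖ = 1 := hunit i hi
        have hexp := norm_sq_expand hA hB hAB i
        rw [hn1] at hexp
        have h1 : ⟪i, A⟫^2/‖A‖^2 + ⟪i, B⟫^2/‖B‖^2 = 1 := by rw [← hexp]; norm_num
        have hane : ‖A‖ ≠ 0 := ne_of_gt ha
        have hbne : ‖B‖ ≠ 0 := ne_of_gt hb
        calc ‖A‖^2 * (R * ⟪i, A⟫/‖A‖^2)^2 + ‖B‖^2 * (R * ⟪i, B⟫/‖B‖^2)^2
            = R^2 * (⟪i, A⟫^2/‖A‖^2 + ⟪i, B⟫^2/‖B‖^2) := by field_simp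
          _ = R^2 := by rw [h1, mul_one]
          _ = (‖A‖^2 + ‖B‖^2)/4 := hR2
      · intro uu tt hu0 hu1' ht0 ht1'
        have hxQ : v 0 + uu • A + tt • B ∈ Q :=
          (hmem _).2 ⟨uu, tt, hu0, hu1', ht0, ht1', rfl⟩
        obtain ⟨r, hrs, hrQ⟩ := hcov _ hxQ
        refine ⟨r, hrs, ?_⟩
        have hRr : R • r = (R * ⟪r, A⟫/‖A‖^2) • A + (R * ⟪r, B⟫/‖B‖^2) • B := by
          conv_lhs => rw [basis_expand hA hB hAB r]
          rw [smul_add, smul_smul, smul_smul]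
          congr 2 <;> ring
        have hxr : v 0 + uu • A + tt • B + R • r
            = v 0 + (uu + R * ⟪r, A⟫/‖A‖^2) • A + (tt + R * ⟪r, B⟫/‖B‖^2) • B := by
          rw [hRr]; module
        rw [hxr] at hrQ
        obtain ⟨s', t', hs0', hs1', ht0', ht1', heq⟩ := (hmem _).1 hrQ
        have heq2 : (uu + R * ⟪r, A⟫/‖A‖^2) • A + (tt + R * ⟪r, B⟫/‖B‖^2) • B
            = s' • A + t' • B := by
          have := heq
          rw [add_assoc, add_assoc] at this
          have h2 := add_left_cancel this
          exact h2
        obtain ⟨he1, he2⟩ := coords_unique hdet heq2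
        constructor
        · linarith
        constructor
        · linarith
        constructor
        · linarith
        · linarith
    exact_mod_cast hge
  rw [iq]
  exact le_antisymm (sInf_le h4mem) (le_sInf hlower)




lemma partB (v : Fin 4 → E2) (Q : Set E2) (hQ : Q = convexHull ℝ (Set.range v))
    (hint : (interior Q).Nonempty)
    (hcyc : ∀ i : Fin 4, segment ℝ (v i) (v (i + 1)) ⊆ frontier Q)
    (c : E2) (R : ℝ) (hcirc : IsCircumball Q c R)
    (s : Finset E2) (hunits : ∀ r ∈ s, ‖r‖ = 1)
    (hcov : ∀ x ∈ Q, ∃ r ∈ s, x + R • r ∈ Q) :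
    ∀ i : Fin 4, ⟪v (i + 1) - v i, v (i - 1) - v i⟫ = 0 := by
  classical
  have hconv : Convex ℝ Q := by rw [hQ]; exact convex_convexHull ℝ _
  have hcomp : IsCompact Q := by rw [hQ]; exact (Set.finite_range v).isCompact_convexHull (𝕜 := ℝ)
  have hclosed : IsClosed Q := hcomp.isClosed
  have hvmem : ∀ i, v i ∈ Q := fun i => by rw [hQ]; exact subset_convexHull ℝ _ ⟨i, rfl⟩
  have hne : Q.Nonempty := ⟨v 0, hvmem 0⟩
  have hsub := hcirc.1
  have hmin := hcirc.2
  have hR0 : 0 < R := Rpos hint hsub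
  have hcmem : c ∈ Q := center_mem hconv hclosed hne hsub hmin hR0
  have hcontact_range : ∀ {t : E2}, t ∈ Q → ‖t - c‖ = R → t ∈ Set.range v := by
    intro t ht htR
    rw [hQ] at ht
    exact contact_in_range v c R (hQ ▸ hsub) ht htR
  have hC : ∀ e : E2, (∀ ε : ℝ, 0 < ε → ∃ δ : ℝ, 0 < δ ∧ δ ≤ ε ∧ c + δ • e ∈ Q) →
      ∃ j : Fin 4, ‖v j - c‖ = R ∧
        ∀ ε : ℝ, 0 < ε → ∃ δ, 0 < δ ∧ δ ≤ ε ∧ v j + δ • e ∈ Q := by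
    intro e he
    obtain ⟨tt, h1, h2, h3⟩ := condC hclosed hR0.le hunits hcov e he
    obtain ⟨j, hj⟩ := hcontact_range h2 h1
    exact ⟨j, hj ▸ h1, hj ▸ h3⟩
  by_cases hcint : c ∈ interior Q
  case neg =>
    -- frontier case: contradiction
    exfalso
    obtain ⟨N, hNne, hNsupp, hNint⟩ := support_at hconv hint hcint
    set n : E2 := -N with hn
    have hnne : n ≠ 0 := neg_ne_zero.2 hNne
    have hsupp : ∀ y ∈ Q, 0 ≤ ⟪y - c, n⟫ := by
      intro y hy
      rw [hn, inner_neg_right]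
      linarith [hNsupp y hy]
    have hTfin : {x | x ∈ Q ∧ ‖x - c‖ = R}.Finite :=
      Set.Finite.subset (Set.finite_range v) (fun x hx => hcontact_range hx.1 hx.2)
    have hhull := center_mem_hull hconv hcomp hne hsub hmin hR0 hTfin
    set Tf : Finset E2 := (Finset.univ.image v).filter (fun x => ‖x - c‖ = R) with hTf
    have hTsub : {x | x ∈ Q ∧ ‖x - c‖ = R} ⊆ (↑Tf : Set E2) := by
      intro x hx
      obtain ⟨j, hj⟩ := hcontact_range hx.1 hx.2
      have hmem' : x ∈ Tf := by
        rw [hTf, Finset.mem_filter]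
        exact ⟨Finset.mem_image.2 ⟨j, Finset.mem_univ j, hj⟩, hx.2⟩
      exact Finset.mem_coe.2 hmem'
    have hhull2 : c ∈ convexHull ℝ (↑Tf : Set E2) := convexHull_mono hTsub hhull
    rw [Finset.convexHull_eq] at hhull2
    obtain ⟨wt, hw0, hw1, hwc⟩ := hhull2
    rw [Finset.centerMass_eq_of_sum_1 _ _ hw1] at hwc
    simp only [id] at hwc
    have hTfQ : ∀ y ∈ Tf, y ∈ Q ∧ ‖y - c‖ = R := by
      intro y hy
      simp only [hTf, Finset.mem_filter, Finset.mem_image, Finset.mem_univ, true_and] at hy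
      obtain ⟨⟨j, hj⟩, hyR⟩ := hy
      exact ⟨hj ▸ hvmem j, hyR⟩
    have hsum0 : ∑ y ∈ Tf, wt y • (y - c) = 0 := by
      have h1 : ∑ y ∈ Tf, wt y • (y - c) = (∑ y ∈ Tf, wt y • y) - (∑ y ∈ Tf, wt y) • c := by
        rw [Finset.sum_smul, ← Finset.sum_sub_distrib]
        congr 1
        ext y
        rw [smul_sub]
      rw [h1, hw1, one_smul, hwc, sub_self]
    have hsuminner : ∀ u : E2, ∑ y ∈ Tf, wt y * ⟪y - c, u⟫ = 0 := by
      intro u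
      have h := congrArg (fun z : E2 => ⟪z, u⟫) hsum0
      simp only [inner_zero_left] at h
      rw [← h, sum_inner]
      congr 1
      ext y
      rw [real_inner_smul_left]
    have hterm0 : ∀ y ∈ Tf, wt y * ⟪y - c, n⟫ = 0 := by
      apply (Finset.sum_eq_zero_iff_of_nonneg ?_).1 (hsuminner n)
      intro y hy
      exact mul_nonneg (hw0 y hy) (hsupp y (hTfQ y hy).1)
    set d : E2 := rot n with hd
    have hdne : d ≠ 0 := rot_ne hnne
    have hnd : ⟪n, d⟫ = 0 := rot_perp n
    have hd2 : (0:ℝ) < ‖d‖^2 := pow_pos (norm_pos_iff.2 hdne) 2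
    have hn2 : (0:ℝ) < ‖n‖^2 := pow_pos (norm_pos_iff.2 hnne) 2
    have hdecomp : ∀ y ∈ Tf, wt y ≠ 0 → y = c + (⟪y - c, d⟫/‖d‖^2) • d := by
      intro y hy hwy
      have hy0 : ⟪y - c, n⟫ = 0 := by
        rcases mul_eq_zero.1 (hterm0 y hy) with h | h
        · exact absurd h hwy
        · exact h
      have hbe := basis_expand hnne hdne hnd (y - c)
      rw [hy0] at hbe
      simp only [zero_div, zero_smul, zero_add] at hbe
      rw [← hbe]
      abel
    have hex1 : ∃ y ∈ Tf, 0 < wt y := by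
      by_contra hno
      push_neg at hno
      have hz : ∑ y ∈ Tf, wt y = 0 :=
        Finset.sum_eq_zero (fun y hy => le_antisymm (hno y hy) (hw0 y hy))
      rw [hw1] at hz
      norm_num at hz
    obtain ⟨y1, hy1Tf, hy1w⟩ := hex1
    have hy1eq := hdecomp y1 hy1Tf (ne_of_gt hy1w)
    set σ1 := ⟪y1 - c, d⟫/‖d‖^2 with hσ1
    have hσ1ne : ⟪y1 - c, d⟫ ≠ 0 := by
      intro h
      have hy1c : y1 = c := by
        rw [hy1eq, hσ1, h, zero_div, zero_smul, add_zero]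
      have hR := (hTfQ y1 hy1Tf).2
      rw [hy1c, sub_self, norm_zero] at hR
      linarith
    have hex2 : ∃ y2 ∈ Tf, wt y2 ≠ 0 ∧ ⟪y2 - c, d⟫ * ⟪y1 - c, d⟫ < 0 := by
      by_contra hno
      push_neg at hno
      have hsum' : ∑ y ∈ Tf, wt y * (⟪y - c, d⟫ * ⟪y1 - c, d⟫) = 0 := by
        have he : ∑ y ∈ Tf, wt y * (⟪y - c, d⟫ * ⟪y1 - c, d⟫)
            = (∑ y ∈ Tf, wt y * ⟪y - c, d⟫) * ⟪y1 - c, d⟫ := by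
          rw [Finset.sum_mul]
          congr 1
          ext y
          ring
        rw [he, hsuminner d, zero_mul]
      have hnn : ∀ y ∈ Tf, 0 ≤ wt y * (⟪y - c, d⟫ * ⟪y1 - c, d⟫) := by
        intro y hy
        rcases eq_or_ne (wt y) 0 with h | h
        · rw [h, zero_mul]
        · exact mul_nonneg (hw0 y hy) (hno y hy h)
      have h1 := (Finset.sum_eq_zero_iff_of_nonneg hnn).1 hsum' y1 hy1Tf
      rcases mul_eq_zero.1 h1 with h | h
      · exact (ne_of_gt hy1w) h
      · rcases mul_eq_zero.1 h with h' | h' <;> exact hσ1ne h'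
    obtain ⟨y2, hy2Tf, hy2w, hsign⟩ := hex2
    have hy2eq := hdecomp y2 hy2Tf hy2w
    set σ2 := ⟪y2 - c, d⟫/‖d‖^2 with hσ2
    have hσsign : σ2 * σ1 < 0 := by
      rw [hσ1, hσ2, div_mul_div_comm]
      apply div_neg_of_neg_of_pos hsign
      positivity
    have hlineQ : ∀ μ : ℝ, min σ1 σ2 ≤ μ → μ ≤ max σ1 σ2 → c + μ • d ∈ Q := by
      intro μ h1 h2
      rcases le_total σ1 σ2 with hle | hle
      · rw [min_eq_left hle] at h1
        rw [max_eq_right hle] at h2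
        have hgap : 0 < σ2 - σ1 := by
          rcases lt_or_eq_of_le hle with h | h
          · linarith
          · exfalso; rw [h] at hσsign; nlinarith [sq_nonneg σ2]
        have hcomb : ((σ2 - μ)/(σ2 - σ1)) • y1 + ((μ - σ1)/(σ2 - σ1)) • y2 ∈ Q :=
          hconv (hTfQ y1 hy1Tf).1 (hTfQ y2 hy2Tf).1
            (by apply div_nonneg; linarith; linarith)
            (by apply div_nonneg; linarith; linarith)
            (by rw [← add_div, div_eq_one_iff_eq (ne_of_gt hgap)]; ring)
        have heq : ((σ2 - μ)/(σ2 - σ1)) • y1 + ((μ - σ1)/(σ2 - σ1)) • y2 = c + μ • d := by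
          rw [hy1eq, hy2eq]
          have ha' : (σ2 - μ)/(σ2 - σ1) + (μ - σ1)/(σ2 - σ1) = 1 := by rw [← add_div, div_eq_one_iff_eq (ne_of_gt hgap)]; ring
          have hb' : ((σ2 - μ)/(σ2 - σ1)) * σ1 + ((μ - σ1)/(σ2 - σ1)) * σ2 = μ := by
            field_simp
            ring
          calc ((σ2 - μ)/(σ2 - σ1)) • (c + σ1 • d) + ((μ - σ1)/(σ2 - σ1)) • (c + σ2 • d)
              = ((σ2 - μ)/(σ2 - σ1) + (μ - σ1)/(σ2 - σ1)) • c
                + (((σ2 - μ)/(σ2 - σ1)) * σ1 + ((μ - σ1)/(σ2 - σ1)) * σ2) • d := by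
                module
            _ = c + μ • d := by rw [ha', hb', one_smul]
        rwa [heq] at hcomb
      · rw [min_eq_right hle] at h1
        rw [max_eq_left hle] at h2
        have hgap : 0 < σ1 - σ2 := by
          rcases lt_or_eq_of_le hle with h | h
          · linarith
          · exfalso; rw [← h] at hσsign; nlinarith [sq_nonneg σ1]
        have hcomb : ((σ1 - μ)/(σ1 - σ2)) • y2 + ((μ - σ2)/(σ1 - σ2)) • y1 ∈ Q :=
          hconv (hTfQ y2 hy2Tf).1 (hTfQ y1 hy1Tf).1
            (by apply div_nonneg; linarith; linarith)
            (by apply div_nonneg; linarith; linarith)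
            (by rw [← add_div, div_eq_one_iff_eq (ne_of_gt hgap)]; ring)
        have heq : ((σ1 - μ)/(σ1 - σ2)) • y2 + ((μ - σ2)/(σ1 - σ2)) • y1 = c + μ • d := by
          rw [hy1eq, hy2eq]
          have ha' : (σ1 - μ)/(σ1 - σ2) + (μ - σ2)/(σ1 - σ2) = 1 := by rw [← add_div, div_eq_one_iff_eq (ne_of_gt hgap)]; ring
          have hb' : ((σ1 - μ)/(σ1 - σ2)) * σ2 + ((μ - σ2)/(σ1 - σ2)) * σ1 = μ := by
            field_simp
            ring
          calc ((σ1 - μ)/(σ1 - σ2)) • (c + σ2 • d) + ((μ - σ2)/(σ1 - σ2)) • (c + σ1 • d)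
              = ((σ1 - μ)/(σ1 - σ2) + (μ - σ2)/(σ1 - σ2)) • c
                + (((σ1 - μ)/(σ1 - σ2)) * σ2 + ((μ - σ2)/(σ1 - σ2)) * σ1) • d := by
                module
            _ = c + μ • d := by rw [ha', hb', one_smul]
        rwa [heq] at hcomb
    -- tangent cone property for n
    obtain ⟨z, hz⟩ := hint
    have hzpos : 0 < ⟪z - c, n⟫ := by
      have := hNint z hz
      rw [hn, inner_neg_right]
      linarith
    have hzQ : z ∈ Q := interior_subset hz
    set ζn := ⟪z - c, n⟫/‖n‖^2 with hζn
    set ζd := ⟪z - c, d⟫/‖d‖^2 with hζd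
    have hζnpos : 0 < ζn := div_pos hzpos hn2
    have hzeq : z = c + ζn • n + ζd • d := by
      have hbe := basis_expand hnne hdne hnd (z - c)
      rw [← hζn, ← hζd] at hbe
      rw [show z = c + (z - c) from by abel, hbe]
      abel
    have hmaxpos : 0 < max σ1 σ2 ∧ min σ1 σ2 < 0 := by
      rcases lt_trichotomy σ1 0 with h | h | h
      · have h2 : 0 < σ2 := by nlinarith
        exact ⟨lt_of_lt_of_le h2 (le_max_right _ _), lt_of_le_of_lt (min_le_left _ _) h⟩
      · exfalso; rw [h] at hσsign; nlinarith
      · have h2 : σ2 < 0 := by nlinarith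
        exact ⟨lt_of_lt_of_le h (le_max_left _ _), lt_of_le_of_lt (min_le_right _ _) h2⟩
    set m0 := min (max σ1 σ2) (-(min σ1 σ2)) with hm0def
    have hm0 : 0 < m0 := lt_min hmaxpos.1 (by linarith [hmaxpos.2])
    have hm0a : m0 ≤ max σ1 σ2 := min_le_left _ _
    have hm0b : m0 ≤ -(min σ1 σ2) := min_le_right _ _
    have hTCn : ∀ ε : ℝ, 0 < ε → ∃ δ, 0 < δ ∧ δ ≤ ε ∧ c + δ • n ∈ Q := by
      intro ε hε
      set lam := min (ε/ζn) (min (1/2) (m0/(2*|ζd|+1))) with hlam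
      have hlampos : 0 < lam := by
        apply lt_min (div_pos hε hζnpos)
        apply lt_min (by norm_num)
        apply div_pos hm0 (by positivity)
      have hlam1 : lam ≤ 1/2 := le_trans (min_le_right _ _) (min_le_left _ _)
      have hlamm : lam ≤ m0/(2*|ζd|+1) := le_trans (min_le_right _ _) (min_le_right _ _)
      have hlamε : lam ≤ ε/ζn := min_le_left _ _
      set μ := -(lam*ζd)/(1 - lam) with hμ
      have h1lam : (0:ℝ) < 1 - lam := by linarith
      have hμb : |μ| ≤ 2*lam*|ζd| := by
        rw [hμ, abs_div, abs_neg, abs_mul, abs_of_pos hlampos, abs_of_pos h1lam,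
          div_le_iff₀ h1lam]
        nlinarith [mul_nonneg hlampos.le (abs_nonneg ζd), hlam1]
      have hμm : |μ| < m0 := by
        have hK : (0:ℝ) < 2*|ζd|+1 := by positivity
        have ht : 0 < m0/(2*|ζd|+1) := div_pos hm0 hK
        have hcan : m0/(2*|ζd|+1) * (2*|ζd|+1) = m0 := div_mul_cancel₀ _ (ne_of_gt hK)
        have h2 : 2*lam*|ζd| ≤ 2*(m0/(2*|ζd|+1))*|ζd| := by nlinarith [abs_nonneg ζd]
        have h3 : 2*(m0/(2*|ζd|+1))*|ζd| < m0 := by nlinarith [abs_nonneg ζd]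
        linarith
      have habs := abs_lt.1 hμm
      have hμlo : min σ1 σ2 ≤ μ := by linarith
      have hμhi : μ ≤ max σ1 σ2 := by linarith
      have hcm := hlineQ μ hμlo hμhi
      refine ⟨lam * ζn, mul_pos hlampos hζnpos, ?_, ?_⟩
      · have h := mul_le_mul_of_nonneg_right hlamε hζnpos.le
        rwa [div_mul_cancel₀ _ (ne_of_gt hζnpos)] at h
      · have hs2 : (1 - lam)*μ + lam*ζd = 0 := by
          rw [hμ]
          field_simp
          ring
        have hkey : (1 - lam) • (c + μ • d) + lam • z
            = c + ((1-lam)*μ + lam*ζd) • d + (lam*ζn) • n := by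
          rw [hzeq]
          module
        rw [hs2, zero_smul, add_zero] at hkey
        have hmem2 := hconv hcm hzQ (a := 1 - lam) (b := lam) (by linarith) hlampos.le (by ring)
        rwa [hkey] at hmem2
    obtain ⟨j, hjR, hjmem⟩ := hC n hTCn
    obtain ⟨δ, hδpos, _, hδmem⟩ := hjmem 1 one_pos
    have hk := kill_ball hδpos hnne hjR (by have := hsub hδmem; rwa [mem_closedBall] at this)
    have hs' := hsupp (v j) (hvmem j)
    linarith
  case pos =>
    -- interior case
    obtain ⟨ρ, hρ, hρball⟩ := Metric.isOpen_iff.1 isOpen_interior c hcint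
    have hTCall : ∀ e : E2, e ≠ 0 → ∀ ε : ℝ, 0 < ε → ∃ δ, 0 < δ ∧ δ ≤ ε ∧ c + δ • e ∈ Q := by
      intro e he ε hε
      have hen : 0 < ‖e‖ := norm_pos_iff.2 he
      refine ⟨min ε (ρ/(2*‖e‖)), lt_min hε (by positivity), min_le_left _ _, ?_⟩
      apply interior_subset
      apply hρball
      rw [mem_ball, dist_eq_norm, show c + min ε (ρ/(2*‖e‖)) • e - c = min ε (ρ/(2*‖e‖)) • e
        from by abel, norm_smul, Real.norm_eq_abs, abs_of_pos (lt_min hε (by positivity))]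
      have h1 : min ε (ρ/(2*‖e‖)) ≤ ρ/(2*‖e‖) := min_le_right _ _
      have h2 : min ε (ρ/(2*‖e‖)) * ‖e‖ ≤ (ρ/(2*‖e‖)) * ‖e‖ :=
        mul_le_mul_of_nonneg_right h1 (norm_nonneg e)
      have h3 : (ρ/(2*‖e‖)) * ‖e‖ = ρ/2 := by field_simp
      rw [h3] at h2
      linarith
    have hCe : ∀ e : E2, e ≠ 0 → ∃ j : Fin 4, ‖v j - c‖ = R ∧ ∃ δ : ℝ, 0 < δ ∧ v j + δ • e ∈ Q := by
      intro e he
      obtain ⟨j, h1, h2⟩ := hC e (hTCall e he)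
      obtain ⟨δ, hδ1, _, hδ3⟩ := h2 1 one_pos
      exact ⟨j, h1, δ, hδ1, hδ3⟩
    -- edge supporting normals
    have hedge : ∀ k : Fin 4, ∃ ν : E2, ν ≠ 0 ∧ (∀ y ∈ Q, ⟪y - v k, ν⟫ ≤ 0) ∧
        ⟪v (k+1) - v k, ν⟫ = 0 := by
      intro k
      set mk := (2⁻¹:ℝ) • (v k + v (k+1)) with hmk
      have hmkseg : mk ∈ segment ℝ (v k) (v (k+1)) :=
        ⟨2⁻¹, 2⁻¹, by norm_num, by norm_num, by norm_num, by rw [hmk]; module⟩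
      have hmkfr : mk ∈ frontier Q := hcyc k hmkseg
      have hmknotint : mk ∉ interior Q := hmkfr.2
      obtain ⟨N, hNne, hNsupp, _⟩ := support_at hconv hint hmknotint
      have hzero : (v k - mk) + (v (k+1) - mk) = 0 := by rw [hmk]; module
      have hsum : ⟪v k - mk, N⟫ + ⟪v (k+1) - mk, N⟫ = 0 := by
        rw [← inner_add_left, hzero, inner_zero_left]
      have h1 := hNsupp (v k) (hvmem k)
      have h2 := hNsupp (v (k+1)) (hvmem (k+1))
      have he1 : ⟪v k - mk, N⟫ = 0 := by linarith
      have he2 : ⟪v (k+1) - mk, N⟫ = 0 := by linarith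
      refine ⟨N, hNne, ?_, ?_⟩
      · intro y hy
        have hsplit : ⟪y - v k, N⟫ = ⟪y - mk, N⟫ - ⟪v k - mk, N⟫ := by
          rw [← inner_sub_left]
          congr 1
          abel
        rw [hsplit, he1]
        linarith [hNsupp y hy]
      · have hsplit : ⟪v (k+1) - v k, N⟫ = ⟪v (k+1) - mk, N⟫ - ⟪v k - mk, N⟫ := by
          rw [← inner_sub_left]
          congr 1
          abel
        rw [hsplit, he1, he2]
        ring
    choose ν hνne hνsupp hνperp using hedge
    -- edge kills
    have hekill : ∀ (k : Fin 4) (e : E2) (δ : ℝ), 0 < δ → 0 < ⟪e, ν k⟫ →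
        (v k + δ • e ∈ Q → False) ∧ (v (k+1) + δ • e ∈ Q → False) := by
      intro k e δ hδ hpos
      have hc1 : ⟪ν k, e⟫ = ⟪e, ν k⟫ := real_inner_comm _ _
      constructor
      · intro hmem'
        have h := hνsupp k _ hmem'
        rw [show v k + δ • e - v k = δ • e from by abel, real_inner_smul_left,
          real_inner_comm] at h
        nlinarith
      · intro hmem'
        have h := hνsupp k _ hmem'
        rw [show v (k+1) + δ • e - v k = (v (k+1) - v k) + δ • e from by abel,
          inner_add_left, hνperp k, real_inner_smul_left, real_inner_comm] at h
        nlinarith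
    -- Test 1: no common direction
    have hnoe : ∀ k : Fin 4, ¬∃ e : E2, 0 < ⟪e, ν k⟫ ∧ 0 < ⟪e, ν (k+2)⟫ := by
      intro k h
      obtain ⟨e, he1, he2⟩ := h
      have hene : e ≠ 0 := by
        intro h0
        rw [h0, inner_zero_left] at he1
        linarith
      obtain ⟨j, hjR, δ, hδ, hjmem⟩ := hCe e hene
      have hj4 : j = k ∨ j = k + 1 ∨ j = k + 2 ∨ j = k + 3 := by omega
      rcases hj4 with rfl | h' | h' | h'
      · exact (hekill j e δ hδ he1).1 hjmem
      · rw [h'] at hjmem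
        exact (hekill k e δ hδ he1).2 hjmem
      · rw [h'] at hjmem
        exact (hekill (k+2) e δ hδ he2).1 hjmem
      · rw [h', show k + 3 = (k + 2) + 1 from by omega] at hjmem
        exact (hekill (k+2) e δ hδ he2).2 hjmem
    have hpar2 : ∀ k : Fin 4, ∃ α : ℝ, α < 0 ∧ ν (k+2) = α • ν k :=
      fun k => antiparallel (hνne k) (hνne (k+2)) (hnoe k)
    -- edge vectors
    set D : Fin 4 → E2 := fun k => v (k+1) - v k with hD
    have hDperp : ∀ k, ⟪D k, ν k⟫ = 0 := by
      intro k
      simp only [hD]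
      exact hνperp k
    have hDperp2 : ∀ k, ⟪D (k+2), ν k⟫ = 0 := by
      intro k
      obtain ⟨α, hα, hαeq⟩ := hpar2 k
      have h := hDperp (k+2)
      rw [hαeq, real_inner_smul_right] at h
      exact (mul_eq_zero.1 h).resolve_left (ne_of_lt hα)
    -- collinearity kills interior
    have hline : ∀ (p dd : E2), dd ≠ 0 → (∀ j : Fin 4, ⟪v j - p, dd⟫ = 0) → False := by
      intro p dd hdd hall
      have hsub' : Set.range v ⊆ {y : E2 | ⟪y - p, dd⟫ = 0} := by
        rintro _ ⟨j, rfl⟩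
        exact hall j
      have hie : interior Q = ∅ := by
        apply interior_line_empty hdd
        intro y hy
        rw [hQ] at hy
        exact convexHull_min hsub' (line_convex p dd) hy
      rw [hie] at hint
      exact Set.not_nonempty_empty hint
    -- nondegeneracy
    have hDne : ∀ k, D k ≠ 0 := by
      intro k hk
      have hvkk : v (k+1) = v k := by
        rw [← sub_eq_zero]
        exact hk
      apply hline (v (k+1)) (ν (k+1)) (hνne (k+1))
      intro j
      have hj4 : j = k ∨ j = k + 1 ∨ j = k + 2 ∨ j = k + 3 := by omega
      rcases hj4 with rfl | h' | h' | h'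
      · rw [hvkk, sub_self, inner_zero_left]
      · rw [h', sub_self, inner_zero_left]
      · rw [h']
        have := hDperp (k+1)
        simp only [hD] at this
        rw [show k + 1 + 1 = k + 2 from by omega] at this
        exact this
      · rw [h']
        have h3 := hDperp2 (k+1)
        simp only [hD] at h3
        rw [show k + 1 + 2 = k + 3 from by omega, show k + 3 + 1 = k from by omega] at h3
        -- h3 : ⟪v k - v (k+3), ν (k+1)⟫ = 0
        have hsplit : ⟪v (k+3) - v (k+1), ν (k+1)⟫
            = -⟪v k - v (k+3), ν (k+1)⟫ := by
          rw [← inner_neg_left]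
          congr 1
          rw [hvkk]
          abel
        rw [hsplit, h3, neg_zero]
    have hDpar : ∀ k, ∃ μ : ℝ, D (k+2) = μ • D k :=
      fun k => perp_collinear (hνne k) (hDperp k) (hDperp2 k) (hDne k)
    -- independence of D 0 and D 1
    have hdet : (D 0) 0 * (D 1) 1 - (D 0) 1 * (D 1) 0 ≠ 0 := by
      intro hdd
      apply hline (v 0) (rot (D 0)) (rot_ne (hDne 0))
      have hD0 : ⟪D 0, rot (D 0)⟫ = 0 := rot_perp (D 0)
      have hD1 : ⟪D 1, rot (D 0)⟫ = 0 := by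
        rw [inner2, rot_apply0, rot_apply1]
        linear_combination hdd
      obtain ⟨μ2, hμ2⟩ := hDpar 0
      have hD2 : ⟪D 2, rot (D 0)⟫ = 0 := by
        rw [show (0:Fin 4) + 2 = 2 from by decide] at hμ2
        rw [hμ2, real_inner_smul_left, hD0, mul_zero]
      intro j
      have hv1 : v 1 - v 0 = D 0 := by simp only [hD]; norm_num
      have hv2 : v 2 - v 0 = D 1 + D 0 := by
        simp only [hD]
        rw [show (1:Fin 4) + 1 = 2 from by decide, show (0:Fin 4) + 1 = 1 from by decide]
        abel
      have hv3 : v 3 - v 0 = D 2 + D 1 + D 0 := by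
        simp only [hD]
        rw [show (2:Fin 4) + 1 = 3 from by decide, show (1:Fin 4) + 1 = 2 from by decide,
          show (0:Fin 4) + 1 = 1 from by decide]
        abel
      have hj4 : j = 0 ∨ j = 1 ∨ j = 2 ∨ j = 3 := by omega
      rcases hj4 with rfl | h' | h' | h'
      · rw [sub_self, inner_zero_left]
      · rw [h', hv1, hD0]
      · rw [h', hv2, inner_add_left, hD1, hD0, add_zero]
      · rw [h', hv3, inner_add_left, inner_add_left, hD0, hD1, hD2, add_zero, add_zero]
    -- parallelogram
    obtain ⟨μ0, hμ0⟩ := hDpar 0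
    obtain ⟨μ1, hμ1⟩ := hDpar 1
    rw [show (0:Fin 4) + 2 = 2 from by decide] at hμ0
    rw [show (1:Fin 4) + 2 = 3 from by decide] at hμ1
    have hcycle : D 0 + D 1 + D 2 + D 3 = 0 := by
      simp only [hD]
      rw [show (0:Fin 4) + 1 = 1 from by decide, show (1:Fin 4) + 1 = 2 from by decide,
        show (2:Fin 4) + 1 = 3 from by decide, show (3:Fin 4) + 1 = 0 from by decide]
      abel
    have hcoef : (1 + μ0) • D 0 + (1 + μ1) • D 1 = (0:ℝ) • D 0 + (0:ℝ) • D 1 := by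
      rw [zero_smul, zero_smul, add_zero]
      calc (1 + μ0) • D 0 + (1 + μ1) • D 1 = D 0 + D 1 + μ0 • D 0 + μ1 • D 1 := by module
        _ = D 0 + D 1 + D 2 + D 3 := by rw [hμ0, hμ1]
        _ = 0 := hcycle
    obtain ⟨hc0, hc1⟩ := coords_unique hdet hcoef
    have hμ0v : D 2 = -D 0 := by
      rw [hμ0, show μ0 = -1 from by linarith]
      module
    have hμ1v : D 3 = -D 1 := by
      rw [hμ1, show μ1 = -1 from by linarith]
      module
    have hpar : v 0 + v 2 = v 1 + v 3 := by
      have h2 : v 3 - v 2 = -(v 1 - v 0) := by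
        have := hμ0v
        simp only [hD] at this
        rw [show (2:Fin 4) + 1 = 3 from by decide, show (0:Fin 4) + 1 = 1 from by decide] at this
        exact this
      have h3 : v 0 + v 2 - (v 1 + v 3) = -((v 3 - v 2) + (v 1 - v 0)) := by abel
      rw [← sub_eq_zero, h3, h2]
      rw [show -(v 1 - v 0) + (v 1 - v 0) = (0:E2) from by abel, neg_zero]
    -- setup box coordinates with A := v 1 - v 0, B := v 3 - v 0
    have hBD1 : v 3 - v 0 = D 1 := by
      have : v 3 - v 0 = D 2 + D 1 + D 0 := by
        simp only [hD]
        rw [show (2:Fin 4) + 1 = 3 from by decide, show (1:Fin 4) + 1 = 2 from by decide,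
          show (0:Fin 4) + 1 = 1 from by decide]
        abel
      rw [this, hμ0v]
      abel
    have hAD0 : v 1 - v 0 = D 0 := by simp only [hD]; norm_num
    have hdetAB : (v 1 - v 0) 0 * (v 3 - v 0) 1 - (v 1 - v 0) 1 * (v 3 - v 0) 0 ≠ 0 := by
      rw [hAD0, hBD1]
      exact hdet
    set A := v 1 - v 0 with hA
    set B := v 3 - v 0 with hB
    have hv2c : v 2 = v 0 + (1:ℝ) • A + (1:ℝ) • B := by
      have hv2' : v 2 = v 1 + v 3 - v 0 := by
        rw [eq_sub_iff_add_eq, add_comm]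
        exact hpar
      rw [hv2', hA, hB]
      module
    have hv1c : v 1 = v 0 + (1:ℝ) • A + (0:ℝ) • B := by rw [hA]; module
    have hv3c : v 3 = v 0 + (0:ℝ) • A + (1:ℝ) • B := by rw [hB]; module
    have hbox : ∀ x ∈ Q, ∃ s' t' : ℝ, 0 ≤ s' ∧ s' ≤ 1 ∧ 0 ≤ t' ∧ t' ≤ 1 ∧
        x = v 0 + s' • A + t' • B := by
      intro x hx
      rw [hQ] at hx
      exact box_rep hpar hx
    -- kill tool: coordinates of a point of Q
    have hcoordbound : ∀ (sa ta : ℝ) (x : E2), x = v 0 + sa • A + ta • B → x ∈ Q →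
        sa ≤ 1 ∧ 0 ≤ sa ∧ ta ≤ 1 ∧ 0 ≤ ta := by
      intro sa ta x hxeq hxQ
      obtain ⟨s', t', hs0, hs1, ht0, ht1, heq⟩ := hbox x hxQ
      rw [hxeq] at heq
      have heq2 : sa • A + ta • B = s' • A + t' • B := by
        have h := heq
        rw [add_assoc, add_assoc] at h
        exact add_left_cancel h
      obtain ⟨he1, he2⟩ := coords_unique hdetAB heq2
      exact ⟨he1 ▸ hs1, he1 ▸ hs0, he2 ▸ ht1, he2 ▸ ht0⟩
    -- all vertices are contact points
    have hADne : A ≠ 0 := by rw [hAD0]; exact hDne 0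
    have hBDne : B ≠ 0 := by rw [hBD1]; exact hDne 1
    have hApBne : A + B ≠ 0 := by
      intro h
      apply hdetAB
      have h0 : A 0 + B 0 = 0 := by
        have := congrArg (fun z => z 0) h
        simpa [PiLp.add_apply] using this
      have h1 : A 1 + B 1 = 0 := by
        have := congrArg (fun z => z 1) h
        simpa [PiLp.add_apply] using this
      have hB0 : B 0 = -A 0 := by linarith
      have hB1 : B 1 = -A 1 := by linarith
      rw [hB0, hB1]
      ring
    have hAmBne : A - B ≠ 0 := by
      intro h
      apply hdetAB
      have h0 : A 0 - B 0 = 0 := by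
        have := congrArg (fun z => z 0) h
        simpa [PiLp.sub_apply] using this
      have h1 : A 1 - B 1 = 0 := by
        have := congrArg (fun z => z 1) h
        simpa [PiLp.sub_apply] using this
      have hB0 : B 0 = A 0 := by linarith
      have hB1 : B 1 = A 1 := by linarith
      rw [hB0, hB1]
      ring
    have hcontactAll : ∀ j0 : Fin 4, ‖v j0 - c‖ = R := by
      intro j0
      by_contra hnc
      have hj0lt : ‖v j0 - c‖ < R := by
        have := hsub (hvmem j0)
        rw [mem_closedBall, dist_eq_norm] at this
        exact lt_of_le_of_ne this hnc
      have hgen : ∀ (ea eb : ℝ) (e : E2), e = ea • A + eb • B → e ≠ 0 →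
          (∀ j : Fin 4, v j = v j0 ∨
            ∃ sj tj : ℝ, v j = v 0 + sj • A + tj • B ∧
              ((sj = 1 ∧ ea = 1) ∨ (sj = 0 ∧ ea = -1) ∨
               (tj = 1 ∧ eb = 1) ∨ (tj = 0 ∧ eb = -1))) →
          False := by
        intro ea eb e heq hene hkills
        obtain ⟨j, hjR, δ, hδ, hjmem⟩ := hCe e hene
        rcases hkills j with hsame | ⟨sj, tj, hrep, hviol⟩
        · rw [hsame] at hjR
          linarith
        · have hxeq : v j + δ • e = v 0 + (sj + δ*ea) • A + (tj + δ*eb) • B := by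
            rw [hrep, heq]
            module
          have hb := hcoordbound _ _ _ hxeq hjmem
          rcases hviol with ⟨h1, h2⟩ | ⟨h1, h2⟩ | ⟨h1, h2⟩ | ⟨h1, h2⟩ <;>
            rw [h1, h2] at hb <;> obtain ⟨b1, b2, b3, b4⟩ := hb <;> linarith
      have hv0c : v 0 = v 0 + (0:ℝ) • A + (0:ℝ) • B := by module
      have hj04 : j0 = 0 ∨ j0 = 1 ∨ j0 = 2 ∨ j0 = 3 := by omega
      rcases hj04 with rfl | rfl | rfl | rfl
      · refine hgen 1 1 (A + B) (by module) hApBne ?_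
        intro j
        have hj4 : j = 0 ∨ j = 1 ∨ j = 2 ∨ j = 3 := by omega
        rcases hj4 with rfl | rfl | rfl | rfl
        · exact Or.inl rfl
        · exact Or.inr ⟨1, 0, hv1c, Or.inl ⟨rfl, rfl⟩⟩
        · exact Or.inr ⟨1, 1, hv2c, Or.inl ⟨rfl, rfl⟩⟩
        · exact Or.inr ⟨0, 1, hv3c, Or.inr (Or.inr (Or.inl ⟨rfl, rfl⟩))⟩
      · refine hgen (-1) 1 (B - A) (by module) ?_ ?_
        · intro h
          apply hAmBne
          have : A - B = -(B - A) := by abel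
          rw [this, h, neg_zero]
        intro j
        have hj4 : j = 0 ∨ j = 1 ∨ j = 2 ∨ j = 3 := by omega
        rcases hj4 with rfl | rfl | rfl | rfl
        · exact Or.inr ⟨0, 0, hv0c, Or.inr (Or.inl ⟨rfl, rfl⟩)⟩
        · exact Or.inl rfl
        · exact Or.inr ⟨1, 1, hv2c, Or.inr (Or.inr (Or.inl ⟨rfl, rfl⟩))⟩
        · exact Or.inr ⟨0, 1, hv3c, Or.inr (Or.inr (Or.inl ⟨rfl, rfl⟩))⟩
      · refine hgen (-1) (-1) (-(A + B)) (by module) (neg_ne_zero.2 hApBne) ?_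
        intro j
        have hj4 : j = 0 ∨ j = 1 ∨ j = 2 ∨ j = 3 := by omega
        rcases hj4 with rfl | rfl | rfl | rfl
        · exact Or.inr ⟨0, 0, hv0c, Or.inr (Or.inl ⟨rfl, rfl⟩)⟩
        · exact Or.inr ⟨1, 0, hv1c, Or.inr (Or.inr (Or.inr ⟨rfl, rfl⟩))⟩
        · exact Or.inl rfl
        · exact Or.inr ⟨0, 1, hv3c, Or.inr (Or.inl ⟨rfl, rfl⟩)⟩
      · refine hgen 1 (-1) (A - B) (by module) hAmBne ?_
        intro j
        have hj4 : j = 0 ∨ j = 1 ∨ j = 2 ∨ j = 3 := by omega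
        rcases hj4 with rfl | rfl | rfl | rfl
        · exact Or.inr ⟨0, 0, hv0c, Or.inr (Or.inr (Or.inr ⟨rfl, rfl⟩))⟩
        · exact Or.inr ⟨1, 0, hv1c, Or.inr (Or.inr (Or.inr ⟨rfl, rfl⟩))⟩
        · exact Or.inr ⟨1, 1, hv2c, Or.inl ⟨rfl, rfl⟩⟩
        · exact Or.inl rfl
    -- conclusion : rectangle
    have hv3' : v 3 = v 0 + v 2 - v 1 := by
      rw [eq_sub_iff_add_eq, add_comm]
      exact hpar.symm
    set m : E2 := (2⁻¹:ℝ) • (v 0 + v 2) with hm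
    set p : E2 := v 0 - m with hp
    set q : E2 := v 1 - m with hq
    have hv1A : v 1 = v 0 + A := by rw [hA]; abel
    have hv0m : v 0 - c = p + (m - c) := by rw [hp]; abel
    have hv2m : v 2 - c = -p + (m - c) := by rw [hp, hm]; module
    have hv1m : v 1 - c = q + (m - c) := by rw [hq]; abel
    have hv3m : v 3 - c = -q + (m - c) := by rw [hv3', hq, hm]; module
    have hnorm : ∀ x g : E2, ‖x + g‖ = ‖-x + g‖ → ⟪x, g⟫ = 0 := by
      intro x g h
      have h2 : ‖x + g‖^2 = ‖-x + g‖^2 := by rw [h]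
      rw [norm_add_sq_real, show -x + g = g - x from by abel, norm_sub_sq_real] at h2
      have hcomm := real_inner_comm x g
      linarith
    have hpg : ⟪p, m - c⟫ = 0 := by
      apply hnorm
      rw [← hv0m, ← hv2m, hcontactAll 0, hcontactAll 2]
    have hqg : ⟪q, m - c⟫ = 0 := by
      apply hnorm
      rw [← hv1m, ← hv3m, hcontactAll 1, hcontactAll 3]
    have hpvec : p = (-2⁻¹ : ℝ) • (A + B) := by
      rw [hp, hm, hv2c]
      module
    have hqvec : q = (2⁻¹ : ℝ) • (A - B) := by
      rw [hq, hm, hv2c, hv1A]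
      module
    have hdetpq : p 0 * q 1 - p 1 * q 0 ≠ 0 := by
      have hp0 : p 0 = -2⁻¹ * (A 0 + B 0) := by
        rw [hpvec]
        simp [PiLp.smul_apply, PiLp.add_apply, smul_eq_mul]
        ring
      have hp1 : p 1 = -2⁻¹ * (A 1 + B 1) := by
        rw [hpvec]
        simp [PiLp.smul_apply, PiLp.add_apply, smul_eq_mul]
        ring
      have hq0 : q 0 = 2⁻¹ * (A 0 - B 0) := by
        rw [hqvec]
        simp [PiLp.smul_apply, PiLp.sub_apply, smul_eq_mul]
      have hq1 : q 1 = 2⁻¹ * (A 1 - B 1) := by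
        rw [hqvec]
        simp [PiLp.smul_apply, PiLp.sub_apply, smul_eq_mul]
      intro h
      apply hdetAB
      rw [hp0, hp1, hq0, hq1] at h
      linear_combination 2 * h
    have hgz : m - c = 0 := solve2 hdetpq hpg hqg
    have hpnorm : ‖p‖ = R := by
      have h := hcontactAll 0
      rw [show v 0 - c = p + (m - c) from hv0m, hgz, add_zero] at h
      exact h
    have hqnorm : ‖q‖ = R := by
      have h := hcontactAll 1
      rw [show v 1 - c = q + (m - c) from hv1m, hgz, add_zero] at h
      exact h
    have hkey : ∀ x y : E2, ‖x‖ = ‖y‖ → ⟪x - y, x + y⟫ = 0 := by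
      intro x y h
      rw [inner_sub_left, inner_add_right, inner_add_right, real_inner_self_eq_norm_sq,
        real_inner_self_eq_norm_sq, real_inner_comm y x, h]
      ring
    have hqp1 : ⟪q - p, q + p⟫ = 0 := hkey q p (by rw [hpnorm, hqnorm])
    have hpq1 : ⟪p - q, p + q⟫ = 0 := hkey p q (by rw [hpnorm, hqnorm])
    have hv10 : v 1 - v 0 = q - p := by rw [hp, hq]; abel
    have hv30 : v 3 - v 0 = -(q + p) := by rw [hv3', hp, hq, hm]; module
    have hv21 : v 2 - v 1 = -(p + q) := by rw [hp, hq, hm]; module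
    have hv01 : v 0 - v 1 = p - q := by rw [hp, hq]; abel
    have hv32 : v 3 - v 2 = p - q := by rw [hv3', hp, hq, hm]; module
    have hv12 : v 1 - v 2 = p + q := by rw [hp, hq, hm]; module
    have hv03 : v 0 - v 3 = q + p := by rw [hv3', hp, hq, hm]; module
    have hv23 : v 2 - v 3 = q - p := by rw [hv3', hp, hq, hm]; module
    intro i
    have hi4 : i = 0 ∨ i = 1 ∨ i = 2 ∨ i = 3 := by omega
    rcases hi4 with rfl | rfl | rfl | rfl
    · rw [show (0:Fin 4) + 1 = 1 from by decide, show (0:Fin 4) - 1 = 3 from by decide,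
        hv10, hv30, inner_neg_right, hqp1, neg_zero]
    · have hcomm1 : ⟪p + q, p - q⟫ = (0:ℝ) := by rw [real_inner_comm]; exact hpq1
      rw [show (1:Fin 4) + 1 = 2 from by decide, show (1:Fin 4) - 1 = 0 from by decide,
        hv21, hv01, inner_neg_left, hcomm1, neg_zero]
    · rw [show (2:Fin 4) + 1 = 3 from by decide, show (2:Fin 4) - 1 = 1 from by decide,
        hv32, hv12, hpq1]
    · have hcomm2 : ⟪q + p, q - p⟫ = (0:ℝ) := by rw [real_inner_comm]; exact hqp1
      rw [show (3:Fin 4) + 1 = 0 from by decide, show (3:Fin 4) - 1 = 2 from by decide,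
        hv03, hv23, hcomm2]


/-- Example (γ): a convex quadrangle `Q ⊆ ℝ²` (vertices `v 0, v 1, v 2, v 3` in cyclic order,
each an extreme point of `Q`) satisfies `i(Q,R(Q)) < ∞` iff `Q` is a rectangle (all four of
its interior angles are right angles); in that case `i(Q,R(Q)) = 4`. -/
theorem iq_quadrangle_at_circumradius (v : Fin 4 → EuclideanSpace ℝ (Fin 2))
    (Q : Set (EuclideanSpace ℝ (Fin 2))) (hQ : Q = convexHull ℝ (Set.range v))
    (hvert : ∀ i, v i ∈ Set.extremePoints ℝ Q)
    (hint : (interior Q).Nonempty)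
    (hcyc : ∀ i : Fin 4, segment ℝ (v i) (v (i + 1)) ⊆ frontier Q)
    (c : EuclideanSpace ℝ (Fin 2)) (R : ℝ) (hcirc : IsCircumball Q c R) :
    (iq Q R < ⊤ ↔ ∀ i : Fin 4, ⟪v (i + 1) - v i, v (i - 1) - v i⟫ = 0) ∧
    ((∀ i : Fin 4, ⟪v (i + 1) - v i, v (i - 1) - v i⟫ = 0) → iq Q R = 4) := by
  have hiq4 : (∀ i : Fin 4, ⟪v (i + 1) - v i, v (i - 1) - v i⟫ = 0) → iq Q R = 4 := by
    intro horth
    have hint' : (interior (convexHull ℝ (Set.range v))).Nonempty := by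
      rw [← hQ]; exact hint
    have hnd := nondeg v hint' horth
    have hA : v 1 - v 0 ≠ 0 := by
      have h := hnd 0
      rw [show (0:Fin 4) + 1 = 1 from by decide] at h
      exact sub_ne_zero.2 (Ne.symm h)
    have hB : v 3 - v 0 ≠ 0 := by
      have h := hnd 3
      rw [show (3:Fin 4) + 1 = 0 from by decide] at h
      exact sub_ne_zero.2 h
    have hAB : ⟪v 1 - v 0, v 3 - v 0⟫ = 0 := by
      have h := horth 0
      rwa [show (0:Fin 4) + 1 = 1 from by decide, show (0:Fin 4) - 1 = 3 from by decide] at h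
    exact partA v Q hQ hA hB hAB (para v hA hB horth) c R hcirc
  constructor
  · constructor
    · intro hlt
      have hSne : {m : ℕ∞ | ∃ s : Finset (EuclideanSpace ℝ (Fin 2)), (s.card : ℕ∞) = m ∧
          (∀ r ∈ s, ‖r‖ = 1) ∧ ∀ x ∈ Q, ∃ r ∈ s, x + R • r ∈ Q}.Nonempty := by
        by_contra h
        rw [Set.not_nonempty_iff_eq_empty] at h
        rw [iq, h, sInf_empty] at hlt
        exact lt_irrefl _ hlt
      obtain ⟨m, sfin, hcard, hunits, hcov⟩ := hSne
      exact partB v Q hQ hint hcyc c R hcirc sfin hunits hcov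
    · intro horth
      rw [hiq4 horth]
      exact lt_top_iff_ne_top.2 (by simp)
  · exact hiq4
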